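/- arXiv:0805.0550 — 3 statements merged into one kernel-verified Lean document; each statement's English description precedes it below -/
import Mathlib

section
/- Well-posedness of the overlapping scheme with coarse-flux/fine-pressure matching: augment the one-dimensional composite finite volume scheme with additional unknowns p_{I+1}^{n,k} (k = 1,…,𝒦) and p_I^{n} (n = 1,…,N₂), interface fluxes u_{I+1/2}^{n,k} = (p_{I+1}^{n,k} − p_I^{n,k})/(x_{I+1} − x_I) and u_{I+1/2}^{n} = (p_{I+1}^{n} − p_I^{n})/(x_{I+1} − x_I), and interface conditions, for every n: δt₂ u_{I+1/2}^{n} = Σ_{k=1}^{𝒦} δt₁ u_{I+1/2}^{n,k} and p_{I+1}^{n,k} = p_{I+1}^{n} for all k. Then for every choice of sources f_j^{n,k}, f_j^{n} and initial values p_j^0, the resulting finite linear system has exactly one solution (p_j^{n,k} for j ≤ I, p_j^{n} for j > I, p_{I+1}^{n,k}, p_I^{n}). -/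
open Finset

/-- Cell center `x_j = (x_{j-1/2} + x_{j+1/2})/2`, where `xh j` denotes `x_{j+1/2}`
(so `xh 0 = x_{1/2}`, …, `xh J = x_{J+1/2}`). -/
noncomputable def xc (xh : ℕ → ℝ) (j : ℕ) : ℝ := (xh (j - 1) + xh j) / 2

/-- Cell width `h_j = x_{j+1/2} − x_{j−1/2}`. -/
noncomputable def hw (xh : ℕ → ℝ) (j : ℕ) : ℝ := xh j - xh (j - 1)

/-- The previous fine-time value `p_j^{n,k−1}`, with the conventions
`p_j^{n,0} = p_j^{n−1,𝒦}` and `p_j^{1,0} = p_j^0`. -/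
def prevF (K : ℕ) (p0 : ℕ → ℝ) (p1 : ℕ → ℕ → ℕ → ℝ) (n k j : ℕ) : ℝ :=
  if k = 1 then (if n = 1 then p0 j else p1 (n - 1) K j) else p1 n (k - 1) j

/-- The previous coarse-time value `p_j^{n−1}`, with the convention `p_j^0 = p_j^0`. -/
def prevC (p0 : ℕ → ℝ) (p2 : ℕ → ℕ → ℝ) (n j : ℕ) : ℝ :=
  if n = 1 then p0 j else p2 (n - 1) j

/-- Fine fluxes `u_{j+1/2}^{n,k}` for face indices `j = 0,…,I` in the overlapping
scheme: `u_{1/2}^{n,k} = p_1^{n,k}/(x_1 − x_{1/2})`,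
`u_{j+1/2}^{n,k} = (p_{j+1}^{n,k} − p_j^{n,k})/(x_{j+1} − x_j)` for `1 ≤ j < I`, and the
interface flux `u_{I+1/2}^{n,k} = (p_{I+1}^{n,k} − p_I^{n,k})/(x_{I+1} − x_I)`, where
`r1 n k` denotes the extra unknown `p_{I+1}^{n,k}`. -/
noncomputable def uF (I : ℕ) (xh : ℕ → ℝ) (p1 : ℕ → ℕ → ℕ → ℝ) (r1 : ℕ → ℕ → ℝ)
    (n k j : ℕ) : ℝ :=
  if j = 0 then p1 n k 1 / (xc xh 1 - xh 0)
  else if j < I then (p1 n k (j + 1) - p1 n k j) / (xc xh (j + 1) - xc xh j)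
  else (r1 n k - p1 n k I) / (xc xh (I + 1) - xc xh I)

/-- Coarse fluxes `u_{j+1/2}^{n}` for face indices `j = I,…,J` in the overlapping
scheme: the interface flux `u_{I+1/2}^{n} = (p_{I+1}^{n} − p_I^{n})/(x_{I+1} − x_I)`
(where `r2 n` denotes the extra unknown `p_I^{n}`),
`u_{j+1/2}^{n} = (p_{j+1}^{n} − p_j^{n})/(x_{j+1} − x_j)` for `I < j < J`, and
`u_{J+1/2}^{n} = −p_J^{n}/(x_{J+1/2} − x_J)`. -/
noncomputable def uC (I J : ℕ) (xh : ℕ → ℝ) (p2 : ℕ → ℕ → ℝ) (r2 : ℕ → ℝ)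
    (n j : ℕ) : ℝ :=
  if j = J then -(p2 n J) / (xh J - xc xh J)
  else if I < j then (p2 n (j + 1) - p2 n j) / (xc xh (j + 1) - xc xh j)
  else (p2 n (I + 1) - r2 n) / (xc xh (I + 1) - xc xh I)

/-- The interior scheme equations of the one-dimensional composite finite volume scheme:
`(h_j/δt₁)(p_j^{n,k} − p_j^{n,k−1}) − (u_{j+1/2}^{n,k} − u_{j−1/2}^{n,k}) = h_j f_j^{n,k}`
for `j = 1,…,I`, `n = 1,…,N₂`, `k = 1,…,𝒦`, and
`(h_j/δt₂)(p_j^{n} − p_j^{n−1}) − (u_{j+1/2}^{n} − u_{j−1/2}^{n}) = h_j f_j^{n}`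
for `j = I+1,…,J`, `n = 1,…,N₂`. -/
def SchemeEqs (J I K N2 : ℕ) (δt1 δt2 : ℝ) (xh : ℕ → ℝ)
    (p0 : ℕ → ℝ) (f1 : ℕ → ℕ → ℕ → ℝ) (f2 : ℕ → ℕ → ℝ)
    (p1 : ℕ → ℕ → ℕ → ℝ) (p2 : ℕ → ℕ → ℝ) (r1 : ℕ → ℕ → ℝ) (r2 : ℕ → ℝ) : Prop :=
  (∀ n ∈ Icc 1 N2, ∀ k ∈ Icc 1 K, ∀ j ∈ Icc 1 I,
      (hw xh j / δt1) * (p1 n k j - prevF K p0 p1 n k j)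
        - (uF I xh p1 r1 n k j - uF I xh p1 r1 n k (j - 1)) = hw xh j * f1 n k j)
  ∧ (∀ n ∈ Icc 1 N2, ∀ j ∈ Icc (I + 1) J,
      (hw xh j / δt2) * (p2 n j - prevC p0 p2 n j)
        - (uC I J xh p2 r2 n j - uC I J xh p2 r2 n (j - 1)) = hw xh j * f2 n j)

/-- Interface conditions of the overlapping scheme with coarse-flux/fine-pressure
matching: `δt₂ u_{I+1/2}^{n} = ∑_{k=1}^{𝒦} δt₁ u_{I+1/2}^{n,k}` and
`p_{I+1}^{n,k} = p_{I+1}^{n}` for all `k`. -/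
def InterfaceCoarseFluxOverlap (J I K N2 : ℕ) (δt1 δt2 : ℝ) (xh : ℕ → ℝ)
    (p1 : ℕ → ℕ → ℕ → ℝ) (p2 : ℕ → ℕ → ℝ) (r1 : ℕ → ℕ → ℝ) (r2 : ℕ → ℝ) : Prop :=
  ∀ n ∈ Icc 1 N2,
    δt2 * uC I J xh p2 r2 n I = ∑ k ∈ Icc 1 K, δt1 * uF I xh p1 r1 n k I
    ∧ ∀ k ∈ Icc 1 K, r1 n k = p2 n (I + 1)

noncomputable def UFa (I : ℕ) (xh : ℕ → ℝ) (a : ℕ → ℕ → ℝ) (b : ℕ → ℝ) : ℕ → ℕ → ℝ :=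
  uF I xh (fun _ => a) (fun _ => b) 0
noncomputable def UCa (I J : ℕ) (xh : ℕ → ℝ) (c : ℕ → ℝ) (d : ℝ) : ℕ → ℝ :=
  uC I J xh (fun _ => c) (fun _ => d) 0

lemma abel_Icc (G p : ℕ → ℝ) (s m : ℕ) (hsm : s ≤ m) :
    ∑ j ∈ Icc (s+1) m, (G j - G (j-1)) * p j
      = G m * (if m = s then 0 else p m)
        - ∑ i ∈ Ico s m, G i * (p (i+1) - (if i = s then 0 else p i)) := by
  induction m with
  | zero =>
      have : s = 0 := by omega
      subst this; simp
  | succ m ih =>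
      rcases Nat.lt_or_ge s (m+1) with h | h
      · have hsm' : s ≤ m := by omega
        rw [Finset.sum_Icc_succ_top (by omega), ih hsm', Finset.sum_Ico_succ_top hsm']
        have h1 : (m + 1) - 1 = m := rfl
        rw [h1]
        rw [if_neg (by omega : ¬ m + 1 = s)]
        by_cases hms : m = s
        · subst hms; simp; ring
        · rw [if_neg hms]; ring
      · have : s = m + 1 := by omega
        subst this; simp

lemma tel_Icc (F : ℕ → ℝ) (m : ℕ) : ∑ k ∈ Icc 1 m, (F k - F (k-1)) = F m - F 0 := by
  induction m with
  | zero => simp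
  | succ m ih => rw [Finset.sum_Icc_succ_top (by omega), ih]; simp

lemma homog_zero (J I K : ℕ) (hI1 : 1 ≤ I) (hIJ : I < J) (hK : 1 ≤ K)
    (δt1 : ℝ) (hδt1 : 0 < δt1) (δt2 : ℝ) (hδt2 : δt2 = (K : ℝ) * δt1)
    (xh : ℕ → ℝ) (hxmono : ∀ j < J, xh j < xh (j + 1))
    (a : ℕ → ℕ → ℝ) (b : ℕ → ℝ) (c : ℕ → ℝ) (d : ℝ)
    (hf : ∀ k ∈ Icc 1 K, ∀ j ∈ Icc 1 I,
      (hw xh j / δt1) * (a k j - (if k = 1 then 0 else a (k-1) j))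
        - (UFa I xh a b k j - UFa I xh a b k (j-1)) = 0)
    (hc : ∀ j ∈ Icc (I+1) J,
      (hw xh j / δt2) * c j - (UCa I J xh c d j - UCa I J xh c d (j-1)) = 0)
    (hx : δt2 * UCa I J xh c d I = ∑ k ∈ Icc 1 K, δt1 * UFa I xh a b k I)
    (hm : ∀ k ∈ Icc 1 K, b k = c (I+1)) :
    (∀ k ∈ Icc 1 K, (∀ j ∈ Icc 1 I, a k j = 0) ∧ b k = 0)
      ∧ (∀ j ∈ Icc (I+1) J, c j = 0) ∧ d = 0 := by
  have hKpos : (0:ℝ) < K := by exact_mod_cast hK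
  have hδt2pos : 0 < δt2 := by rw [hδt2]; positivity
  have hδt1ne : δt1 ≠ 0 := ne_of_gt hδt1
  have hδt2ne : δt2 ≠ 0 := ne_of_gt hδt2pos
  -- geometric positivity
  have hxcd : ∀ i, 1 ≤ i → i < J → 0 < xc xh (i+1) - xc xh i := by
    intro i h1 h2
    have e1 := hxmono (i-1) (by omega)
    have e2 := hxmono i h2
    have hi : i - 1 + 1 = i := by omega
    rw [hi] at e1
    simp only [xc]
    have h3 : i + 1 - 1 = i := by omega
    rw [h3]
    linarith
  have hd0 : 0 < xc xh 1 - xh 0 := by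
    have := hxmono 0 (by omega)
    simp only [xc]
    norm_num
    linarith
  have hdJ : 0 < xh J - xc xh J := by
    have h := hxmono (J-1) (by omega)
    have hJ1 : J - 1 + 1 = J := by omega
    rw [hJ1] at h
    simp only [xc]
    linarith
  have hhw : ∀ j, 1 ≤ j → j ≤ J → 0 < hw xh j := by
    intro j h1 h2
    have h := hxmono (j-1) (by omega)
    have hj1 : j - 1 + 1 = j := by omega
    rw [hj1] at h
    simp only [hw]
    linarith
  -- flux value lemmas
  set U : ℕ → ℕ → ℝ := UFa I xh a b with hU
  set V : ℕ → ℝ := UCa I J xh c d with hV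
  have hU0 : ∀ k, U k 0 = a k 1 / (xc xh 1 - xh 0) := by
    intro k; rw [hU]; simp [UFa, uF]
  have hUmid : ∀ k i, 1 ≤ i → i < I → U k i = (a k (i+1) - a k i)/(xc xh (i+1) - xc xh i) := by
    intro k i h1 h2; rw [hU]
    show (if i = 0 then _ else if i < I then _ else _) = _
    rw [if_neg (by omega), if_pos h2]
  have hUI : ∀ k, U k I = (b k - a k I)/(xc xh (I+1) - xc xh I) := by
    intro k; rw [hU]
    show (if I = 0 then _ else if I < I then _ else _) = _
    rw [if_neg (by omega), if_neg (by omega)]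
  have hVI : V I = (c (I+1) - d)/(xc xh (I+1) - xc xh I) := by
    rw [hV]
    show (if I = J then _ else if I < I then _ else _) = _
    rw [if_neg (by omega), if_neg (by omega)]
  have hVmid : ∀ i, I < i → i < J → V i = (c (i+1) - c i)/(xc xh (i+1) - xc xh i) := by
    intro i h1 h2; rw [hV]
    show (if i = J then _ else if I < i then _ else _) = _
    rw [if_neg (by omega), if_pos h1]
  have hVJ : V J = -(c J)/(xh J - xc xh J) := by
    rw [hV]
    show (if J = J then _ else _) = _
    rw [if_pos rfl]
  set A : ℕ → ℕ → ℝ := fun k j => if k = 0 then 0 else a k j with hA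
  set DD : ℕ → ℝ := fun i => if i = 0 then xc xh 1 - xh 0 else xc xh (i+1) - xc xh i with hDD
  have hDDpos : ∀ i, i < I → 0 < DD i := by
    intro i hi
    rw [hDD]
    by_cases h : i = 0
    · simp [h, hd0]
    · simp only [if_neg h]; exact hxcd i (by omega) (by omega)
  -- fine energy identity per k
  have E1 : ∀ k ∈ Icc 1 K, ∑ j ∈ Icc 1 I, hw xh j * ((A k j - A (k-1) j) * A k j)
      = δt1 * (U k I * a k I - ∑ i ∈ Ico 0 I, DD i * (U k i)^2) := by
    intro k hk
    obtain ⟨hk1, hk2⟩ := mem_Icc.mp hk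
    have hpt : ∀ j ∈ Icc 1 I, hw xh j * ((A k j - A (k-1) j) * A k j)
        = δt1 * ((U k j - U k (j-1)) * a k j) := by
      intro j hj
      obtain ⟨hj1, hj2⟩ := mem_Icc.mp hj
      have hfe := hf k hk j hj
      have hAk : A k j = a k j := by rw [hA]; simp only [if_neg (by omega : ¬ k = 0)]
      have hAk' : A (k-1) j = (if k = 1 then 0 else a (k-1) j) := by
        by_cases h : k = 1
        · subst h; rw [hA]; simp
        · rw [hA]; simp only [if_neg (by omega : ¬ k - 1 = 0), if_neg h]
      rw [hAk, hAk']
      have h2 : hw xh j * (a k j - (if k = 1 then 0 else a (k-1) j))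
          = δt1 * (U k j - U k (j-1)) := by
        field_simp at hfe
        linarith
      calc hw xh j * ((a k j - (if k = 1 then 0 else a (k-1) j)) * a k j)
          = (hw xh j * (a k j - (if k = 1 then 0 else a (k-1) j))) * a k j := by ring
        _ = (δt1 * (U k j - U k (j-1))) * a k j := by rw [h2]
        _ = δt1 * ((U k j - U k (j-1)) * a k j) := by ring
    rw [Finset.sum_congr rfl hpt, ← Finset.mul_sum]
    congr 1
    have habel := abel_Icc (U k) (a k) 0 I (by omega)
    simp only [Nat.zero_add] at habel ⊢
    rw [habel, if_neg (by omega : ¬ I = 0)]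
    congr 1
    refine Finset.sum_congr rfl fun i hi => ?_
    have hiI : i < I := by simpa using (Finset.mem_Ico.mp hi).2
    by_cases h0 : i = 0
    · subst h0
      have ha1 : a k 1 = DD 0 * U k 0 := by
        rw [hU0 k, hDD]; simp only [if_pos rfl, reduceIte]; field_simp
      simp only [reduceIte, ha1]
      ring
    · rw [if_neg h0]
      have hstep : a k (i+1) - a k i = DD i * U k i := by
        rw [hUmid k i (by omega) hiI]
        simp only [hDD]
        rw [if_neg h0]
        have := hxcd i (by omega) (by omega)
        field_simp
      rw [hstep]; ring
    -- coarse energy identity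
  have E2 : ∑ j ∈ Icc (I+1) J, hw xh j * (c j * c j)
      = δt2 * (V J * c J - (V I * c (I+1) + ∑ i ∈ Ico I J, (if i = I then 0 else DD i * (V i)^2))) := by
    have hpt2 : ∀ j ∈ Icc (I+1) J, hw xh j * (c j * c j) = δt2 * ((V j - V (j-1)) * c j) := by
      intro j hj
      have hce := hc j hj
      have h2 : hw xh j * c j = δt2 * (V j - V (j-1)) := by
        field_simp at hce
        linarith
      calc hw xh j * (c j * c j) = (hw xh j * c j) * c j := by ring
        _ = (δt2 * (V j - V (j-1))) * c j := by rw [h2]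
        _ = δt2 * ((V j - V (j-1)) * c j) := by ring
    rw [Finset.sum_congr rfl hpt2, ← Finset.mul_sum]
    congr 1
    have habel := abel_Icc V c I J (le_of_lt hIJ)
    rw [habel, if_neg (by omega : ¬ J = I)]
    congr 1
    have hsplit : ∀ i ∈ Ico I J, V i * (c (i+1) - if i = I then 0 else c i)
        = (if i = I then V I * c (I+1) else 0) + (if i = I then 0 else DD i * (V i)^2) := by
      intro i hi
      obtain ⟨hi1, hi2⟩ := Finset.mem_Ico.mp hi
      by_cases h : i = I
      · subst h; simp
      · rw [if_neg h, if_neg h, if_neg h]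
        have hstepc : c (i+1) - c i = DD i * V i := by
          rw [hVmid i (by omega) hi2]
          simp only [hDD]
          rw [if_neg (by omega : ¬ i = 0)]
          have := hxcd i (by omega) (by omega)
          field_simp
        rw [hstepc]; ring
    rw [Finset.sum_congr rfl hsplit, Finset.sum_add_distrib]
    congr 1
    rw [Finset.sum_ite_eq' (Ico I J) I (fun _ => V I * c (I+1))]
    rw [if_pos (Finset.mem_Ico.mpr ⟨le_refl I, hIJ⟩)]
  -- splitting fine LHS into telescope + dissipation
  have hLHSsum : ∑ k ∈ Icc 1 K, ∑ j ∈ Icc 1 I, hw xh j * ((A k j - A (k-1) j) * A k j)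
      = ∑ j ∈ Icc 1 I, hw xh j * (A K j)^2/2
        + ∑ k ∈ Icc 1 K, ∑ j ∈ Icc 1 I, hw xh j * (A k j - A (k-1) j)^2/2 := by
    have hsq : ∀ k ∈ Icc 1 K, ∑ j ∈ Icc 1 I, hw xh j * ((A k j - A (k-1) j) * A k j)
        = ∑ j ∈ Icc 1 I, (hw xh j * ((A k j)^2 - (A (k-1) j)^2)/2
            + hw xh j * (A k j - A (k-1) j)^2/2) := by
      intro k _
      exact Finset.sum_congr rfl fun j _ => by ring
    rw [Finset.sum_congr rfl hsq]
    simp only [Finset.sum_add_distrib]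
    congr 1
    rw [Finset.sum_comm]
    refine Finset.sum_congr rfl fun j _ => ?_
    have htel : ∑ k ∈ Icc 1 K, ((A k j)^2 - (A (k-1) j)^2) = (A K j)^2 := by
      rw [tel_Icc (fun k => (A k j)^2) K]
      simp [hA]
    calc ∑ k ∈ Icc 1 K, hw xh j * ((A k j)^2 - (A (k-1) j)^2)/2
        = hw xh j * (∑ k ∈ Icc 1 K, ((A k j)^2 - (A (k-1) j)^2))/2 := by
          rw [Finset.mul_sum, Finset.sum_div]
      _ = hw xh j * (A K j)^2/2 := by rw [htel]
  have hFineTot : ∑ j ∈ Icc 1 I, hw xh j * (A K j)^2/2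
      + ∑ k ∈ Icc 1 K, ∑ j ∈ Icc 1 I, hw xh j * (A k j - A (k-1) j)^2/2
      = δt1 * ∑ k ∈ Icc 1 K, (U k I * a k I)
        - δt1 * ∑ k ∈ Icc 1 K, ∑ i ∈ Ico 0 I, DD i * (U k i)^2 := by
    rw [← hLHSsum, Finset.sum_congr rfl E1, ← mul_sub, ← Finset.sum_sub_distrib, Finset.mul_sum]
  have hBnd : δt2 * (V I * c (I+1)) = δt1 * ∑ k ∈ Icc 1 K, (U k I * b k) := by
    have h1 : ∑ k ∈ Icc 1 K, (U k I * b k) = (∑ k ∈ Icc 1 K, U k I) * c (I+1) := by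
      rw [Finset.sum_mul]
      exact Finset.sum_congr rfl fun k hk => by rw [hm k hk]
    have h2 : δt1 * ∑ k ∈ Icc 1 K, U k I = δt2 * V I := by
      rw [Finset.mul_sum]; exact hx.symm
    calc δt2 * (V I * c (I+1)) = (δt2 * V I) * c (I+1) := by ring
      _ = (δt1 * ∑ k ∈ Icc 1 K, U k I) * c (I+1) := by rw [h2]
      _ = δt1 * ∑ k ∈ Icc 1 K, (U k I * b k) := by rw [h1]; ring
  have hS7eq : ∑ k ∈ Icc 1 K, (U k I * a k I) - ∑ k ∈ Icc 1 K, (U k I * b k)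
      = - ∑ k ∈ Icc 1 K, (xc xh (I+1) - xc xh I) * (U k I)^2 := by
    rw [← Finset.sum_sub_distrib, ← Finset.sum_neg_distrib]
    refine Finset.sum_congr rfl fun k hk => ?_
    have hba : b k - a k I = (xc xh (I+1) - xc xh I) * U k I := by
      rw [hUI k]
      have := hxcd I hI1 hIJ
      field_simp
    calc U k I * a k I - U k I * b k = -(U k I * (b k - a k I)) := by ring
      _ = -((xc xh (I+1) - xc xh I) * (U k I)^2) := by rw [hba]; ring
  have hVJc : V J * c J = -((c J)^2/(xh J - xc xh J)) := by
    rw [hVJ]; ring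
  -- grand energy identity
  have hE : (∑ j ∈ Icc 1 I, hw xh j * (A K j)^2/2)
      + (∑ k ∈ Icc 1 K, ∑ j ∈ Icc 1 I, hw xh j * (A k j - A (k-1) j)^2/2)
      + δt1 * (∑ k ∈ Icc 1 K, ∑ i ∈ Ico 0 I, DD i * (U k i)^2)
      + (∑ j ∈ Icc (I+1) J, hw xh j * (c j * c j))
      + δt2 * (∑ i ∈ Ico I J, (if i = I then 0 else DD i * (V i)^2))
      + δt2 * ((c J)^2/(xh J - xc xh J))
      + δt1 * (∑ k ∈ Icc 1 K, (xc xh (I+1) - xc xh I) * (U k I)^2) = 0 := by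
    linear_combination hFineTot + E2 + δt2 * hVJc - hBnd + δt1 * hS7eq
    -- nonnegativity of all pieces
  have hS1n : 0 ≤ ∑ j ∈ Icc 1 I, hw xh j * (A K j)^2/2 := by
    refine Finset.sum_nonneg fun j hj => ?_
    obtain ⟨h1, h2⟩ := mem_Icc.mp hj
    have := hhw j h1 (by omega)
    positivity
  have hS2n : ∀ k ∈ Icc 1 K, ∀ j ∈ Icc 1 I, 0 ≤ hw xh j * (A k j - A (k-1) j)^2/2 := by
    intro k _ j hj
    obtain ⟨h1, h2⟩ := mem_Icc.mp hj
    have := hhw j h1 (by omega)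
    positivity
  have hS2n' : ∀ k ∈ Icc 1 K, 0 ≤ ∑ j ∈ Icc 1 I, hw xh j * (A k j - A (k-1) j)^2/2 :=
    fun k hk => Finset.sum_nonneg (hS2n k hk)
  have hS2N : 0 ≤ ∑ k ∈ Icc 1 K, ∑ j ∈ Icc 1 I, hw xh j * (A k j - A (k-1) j)^2/2 :=
    Finset.sum_nonneg hS2n'
  have hS3n : 0 ≤ ∑ k ∈ Icc 1 K, ∑ i ∈ Ico 0 I, DD i * (U k i)^2 := by
    refine Finset.sum_nonneg fun k _ => Finset.sum_nonneg fun i hi => ?_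
    have := hDDpos i (Finset.mem_Ico.mp hi).2
    positivity
  have hS4n : ∀ j ∈ Icc (I+1) J, 0 ≤ hw xh j * (c j * c j) := by
    intro j hj
    obtain ⟨h1, h2⟩ := mem_Icc.mp hj
    exact mul_nonneg (hhw j (by omega) h2).le (mul_self_nonneg _)
  have hS4N : 0 ≤ ∑ j ∈ Icc (I+1) J, hw xh j * (c j * c j) := Finset.sum_nonneg hS4n
  have hS5n : ∀ i ∈ Ico I J, (0:ℝ) ≤ (if i = I then 0 else DD i * (V i)^2) := by
    intro i hi
    obtain ⟨hi1, hi2⟩ := Finset.mem_Ico.mp hi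
    by_cases h : i = I
    · simp [h]
    · rw [if_neg h]
      have hDDi : 0 < DD i := by
        simp only [hDD]
        rw [if_neg (by omega : ¬ i = 0)]
        exact hxcd i (by omega) hi2
      positivity
  have hS5N : 0 ≤ ∑ i ∈ Ico I J, (if i = I then 0 else DD i * (V i)^2) :=
    Finset.sum_nonneg hS5n
  have hQn : 0 ≤ (c J)^2/(xh J - xc xh J) := by positivity
  have hS7n : ∀ k ∈ Icc 1 K, 0 ≤ (xc xh (I+1) - xc xh I) * (U k I)^2 := by
    intro k _
    have := hxcd I hI1 hIJ
    positivity
  have hS7N : 0 ≤ ∑ k ∈ Icc 1 K, (xc xh (I+1) - xc xh I) * (U k I)^2 :=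
    Finset.sum_nonneg hS7n
  have hm3 : 0 ≤ δt1 * (∑ k ∈ Icc 1 K, ∑ i ∈ Ico 0 I, DD i * (U k i)^2) :=
    mul_nonneg hδt1.le hS3n
  have hm5 : 0 ≤ δt2 * (∑ i ∈ Ico I J, (if i = I then 0 else DD i * (V i)^2)) :=
    mul_nonneg hδt2pos.le hS5N
  have hmQ : 0 ≤ δt2 * ((c J)^2/(xh J - xc xh J)) := mul_nonneg hδt2pos.le hQn
  have hm7 : 0 ≤ δt1 * (∑ k ∈ Icc 1 K, (xc xh (I+1) - xc xh I) * (U k I)^2) :=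
    mul_nonneg hδt1.le hS7N
  have hS2z : ∑ k ∈ Icc 1 K, ∑ j ∈ Icc 1 I, hw xh j * (A k j - A (k-1) j)^2/2 = 0 := by
    linarith
  have hS4z : ∑ j ∈ Icc (I+1) J, hw xh j * (c j * c j) = 0 := by linarith
  have hS7z : ∑ k ∈ Icc 1 K, (xc xh (I+1) - xc xh I) * (U k I)^2 = 0 := by
    have h7 : δt1 * (∑ k ∈ Icc 1 K, (xc xh (I+1) - xc xh I) * (U k I)^2) = 0 := by linarith
    rcases mul_eq_zero.mp h7 with h | h
    · exact absurd h hδt1ne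
    · exact h
  have hcz : ∀ j ∈ Icc (I+1) J, c j = 0 := by
    intro j hj
    have h := (Finset.sum_eq_zero_iff_of_nonneg hS4n).mp hS4z j hj
    obtain ⟨h1, h2⟩ := mem_Icc.mp hj
    have hwp := hhw j (by omega) h2
    have hcc : c j * c j = 0 := by
      rcases mul_eq_zero.mp h with h' | h'
      · exact absurd h' (ne_of_gt hwp)
      · exact h'
    exact mul_self_eq_zero.mp hcc
  have hΔ : ∀ k ∈ Icc 1 K, ∀ j ∈ Icc 1 I, A k j = A (k-1) j := by
    intro k hk j hj
    have hin := (Finset.sum_eq_zero_iff_of_nonneg hS2n').mp hS2z k hk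
    have h := (Finset.sum_eq_zero_iff_of_nonneg (hS2n k hk)).mp hin j hj
    obtain ⟨h1, h2⟩ := mem_Icc.mp hj
    have hwp := hhw j h1 (by omega)
    have hsqz : (A k j - A (k-1) j)^2 = 0 := by
      have h' : hw xh j * (A k j - A (k-1) j)^2 = 0 := by linarith
      rcases mul_eq_zero.mp h' with h'' | h''
      · exact absurd h'' (ne_of_gt hwp)
      · exact h''
    have := sq_eq_zero_iff.mp hsqz
    linarith
  have haz : ∀ k, k ≤ K → ∀ j ∈ Icc 1 I, A k j = 0 := by
    intro k
    induction k with
    | zero => intro _ j _; simp [hA]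
    | succ k ih =>
        intro hk j hj
        have h := hΔ (k+1) (mem_Icc.mpr ⟨by omega, hk⟩) j hj
        rw [h]
        exact ih (by omega) j hj
  have haz' : ∀ k ∈ Icc 1 K, ∀ j ∈ Icc 1 I, a k j = 0 := by
    intro k hk j hj
    obtain ⟨hk1, hk2⟩ := mem_Icc.mp hk
    have h := haz k hk2 j hj
    rw [hA] at h
    simpa [if_neg (by omega : ¬ k = 0)] using h
  have hUIz : ∀ k ∈ Icc 1 K, U k I = 0 := by
    intro k hk
    have h := (Finset.sum_eq_zero_iff_of_nonneg hS7n).mp hS7z k hk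
    have hd := hxcd I hI1 hIJ
    rcases mul_eq_zero.mp h with h' | h'
    · exact absurd h' (ne_of_gt hd)
    · exact sq_eq_zero_iff.mp h'
  have hbz : ∀ k ∈ Icc 1 K, b k = 0 := by
    intro k hk
    have hba : b k - a k I = (xc xh (I+1) - xc xh I) * U k I := by
      rw [hUI k]
      have := hxcd I hI1 hIJ
      field_simp
    rw [hUIz k hk] at hba
    have haI : a k I = 0 := haz' k hk I (mem_Icc.mpr ⟨hI1, le_refl I⟩)
    rw [haI] at hba
    simpa using hba
  have hsum0 : ∑ k ∈ Icc 1 K, δt1 * U k I = 0 :=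
    Finset.sum_eq_zero fun k hk => by rw [hUIz k hk]; ring
  have hVIz : V I = 0 := by
    have h := hx
    rw [hsum0] at h
    rcases mul_eq_zero.mp h with h' | h'
    · exact absurd h' hδt2ne
    · exact h'
  have hcI1 : c (I+1) = 0 := hcz (I+1) (mem_Icc.mpr ⟨le_refl _, by omega⟩)
  have hdz : d = 0 := by
    have h := hVI
    rw [hVIz, hcI1] at h
    have hd := hxcd I hI1 hIJ
    field_simp at h
    linarith
  exact ⟨fun k hk => ⟨haz' k hk, hbz k hk⟩, hcz, hdz⟩

section Step
open Finset

def StepEqs' (J I K : ℕ) (δt1 δt2 : ℝ) (xh : ℕ → ℝ) (qF qC : ℕ → ℝ)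
    (g1 : ℕ → ℕ → ℝ) (g2 : ℕ → ℝ)
    (a : ℕ → ℕ → ℝ) (b : ℕ → ℝ) (c : ℕ → ℝ) (d : ℝ) : Prop :=
  (∀ k ∈ Icc 1 K, ∀ j ∈ Icc 1 I,
    (hw xh j / δt1) * (a k j - (if k = 1 then qF j else a (k-1) j))
      - (UFa I xh a b k j - UFa I xh a b k (j-1)) = hw xh j * g1 k j)
  ∧ (∀ j ∈ Icc (I+1) J,
    (hw xh j / δt2) * (c j - qC j) - (UCa I J xh c d j - UCa I J xh c d (j-1)) = hw xh j * g2 j)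
  ∧ δt2 * UCa I J xh c d I = ∑ k ∈ Icc 1 K, δt1 * UFa I xh a b k I
  ∧ ∀ k ∈ Icc 1 K, b k = c (I+1)

lemma UFa_sub (I : ℕ) (xh : ℕ → ℝ) (a a' : ℕ → ℕ → ℝ) (b b' : ℕ → ℝ) (k j : ℕ) :
    UFa I xh (fun k j => a k j - a' k j) (fun k => b k - b' k) k j
      = UFa I xh a b k j - UFa I xh a' b' k j := by
  simp only [UFa, uF]
  split_ifs <;> ring

lemma UCa_sub (I J : ℕ) (xh : ℕ → ℝ) (c c' : ℕ → ℝ) (d d' : ℝ) (j : ℕ) :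
    UCa I J xh (fun j => c j - c' j) (d - d') j = UCa I J xh c d j - UCa I J xh c' d' j := by
  simp only [UCa, uC]
  split_ifs <;> ring

lemma step_unique (J I K : ℕ) (hI1 : 1 ≤ I) (hIJ : I < J) (hK : 1 ≤ K)
    (δt1 : ℝ) (hδt1 : 0 < δt1) (δt2 : ℝ) (hδt2 : δt2 = (K : ℝ) * δt1)
    (xh : ℕ → ℝ) (hxmono : ∀ j < J, xh j < xh (j + 1))
    (qF qC qF' qC' : ℕ → ℝ) (g1 : ℕ → ℕ → ℝ) (g2 : ℕ → ℝ)
    (a a' : ℕ → ℕ → ℝ) (b b' : ℕ → ℝ) (c c' : ℕ → ℝ) (d d' : ℝ)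
    (hqF : ∀ j ∈ Icc 1 I, qF j = qF' j) (hqC : ∀ j ∈ Icc (I+1) J, qC j = qC' j)
    (h1 : StepEqs' J I K δt1 δt2 xh qF qC g1 g2 a b c d)
    (h2 : StepEqs' J I K δt1 δt2 xh qF' qC' g1 g2 a' b' c' d') :
    (∀ k ∈ Icc 1 K, (∀ j ∈ Icc 1 I, a k j = a' k j) ∧ b k = b' k)
      ∧ (∀ j ∈ Icc (I+1) J, c j = c' j) ∧ d = d' := by
  have H := homog_zero J I K hI1 hIJ hK δt1 hδt1 δt2 hδt2 xh hxmono
    (fun k j => a k j - a' k j) (fun k => b k - b' k) (fun j => c j - c' j) (d - d')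
    (by
      intro k hk j hj
      have e1 := h1.1 k hk j hj
      have e2 := h2.1 k hk j hj
      rw [UFa_sub, UFa_sub]
      by_cases hk1 : k = 1
      · simp only [if_pos hk1] at e1 e2 ⊢
        linear_combination e1 - e2 + (hw xh j / δt1) * (hqF j hj)
      · simp only [if_neg hk1] at e1 e2 ⊢
        linear_combination e1 - e2)
    (by
      intro j hj
      have e1 := h1.2.1 j hj
      have e2 := h2.2.1 j hj
      rw [UCa_sub, UCa_sub]
      linear_combination e1 - e2 + (hw xh j / δt2) * (hqC j hj))
    (by
      have e1 := h1.2.2.1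
      have e2 := h2.2.2.1
      rw [UCa_sub]
      have hs : ∑ k ∈ Icc 1 K, δt1 * UFa I xh (fun k j => a k j - a' k j) (fun k => b k - b' k) k I
          = ∑ k ∈ Icc 1 K, (δt1 * UFa I xh a b k I - δt1 * UFa I xh a' b' k I) := by
        refine Finset.sum_congr rfl fun k _ => ?_
        rw [UFa_sub]; ring
      rw [hs, Finset.sum_sub_distrib]
      linear_combination e1 - e2)
    (by
      intro k hk
      have e1 := h1.2.2.2 k hk
      have e2 := h2.2.2.2 k hk
      rw [e1, e2])
  refine ⟨fun k hk => ⟨fun j hj => ?_, ?_⟩, fun j hj => ?_, ?_⟩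
  · have h := (H.1 k hk).1 j hj
    linarith
  · have h := (H.1 k hk).2
    linarith
  · have h := H.2.1 j hj
    linarith
  · have h := H.2.2
    linarith

end Step
section Exist
open Finset

abbrev Idx (J I K : ℕ) : Type := (Fin K × Fin I) ⊕ (Fin K ⊕ (Fin (J - I) ⊕ Unit))

def deA (J I K : ℕ) (x : Idx J I K → ℝ) (k j : ℕ) : ℝ :=
  if h : 1 ≤ k ∧ k ≤ K ∧ 1 ≤ j ∧ j ≤ I then
    x (Sum.inl (⟨k-1, by omega⟩, ⟨j-1, by omega⟩)) else 0

def deB (J I K : ℕ) (x : Idx J I K → ℝ) (k : ℕ) : ℝ :=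
  if h : 1 ≤ k ∧ k ≤ K then x (Sum.inr (Sum.inl ⟨k-1, by omega⟩)) else 0

def deC (J I K : ℕ) (x : Idx J I K → ℝ) (j : ℕ) : ℝ :=
  if h : I+1 ≤ j ∧ j ≤ J then x (Sum.inr (Sum.inr (Sum.inl ⟨j-(I+1), by omega⟩))) else 0

def deD (J I K : ℕ) (x : Idx J I K → ℝ) : ℝ := x (Sum.inr (Sum.inr (Sum.inr ())))

lemma deA_spec (J I K : ℕ) (x : Idx J I K → ℝ) (k : Fin K) (j : Fin I) :
    deA J I K x (k.1+1) (j.1+1) = x (Sum.inl (k, j)) := by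
  have hcond : 1 ≤ k.1+1 ∧ k.1+1 ≤ K ∧ 1 ≤ j.1+1 ∧ j.1+1 ≤ I :=
    ⟨by omega, by omega, by omega, by omega⟩
  simp only [deA]
  rw [dif_pos hcond]
  have e1 : (⟨k.1+1-1, by omega⟩ : Fin K) = k := Fin.ext (by change k.1+1-1 = k.1; omega)
  have e2 : (⟨j.1+1-1, by omega⟩ : Fin I) = j := Fin.ext (by change j.1+1-1 = j.1; omega)
  rw [e1, e2]

lemma deB_spec (J I K : ℕ) (x : Idx J I K → ℝ) (k : Fin K) :
    deB J I K x (k.1+1) = x (Sum.inr (Sum.inl k)) := by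
  have hcond : 1 ≤ k.1+1 ∧ k.1+1 ≤ K := ⟨by omega, by omega⟩
  simp only [deB]
  rw [dif_pos hcond]
  have e1 : (⟨k.1+1-1, by omega⟩ : Fin K) = k := Fin.ext (by change k.1+1-1 = k.1; omega)
  rw [e1]

lemma deC_spec (J I K : ℕ) (x : Idx J I K → ℝ) (jj : Fin (J - I)) :
    deC J I K x (I+1+jj.1) = x (Sum.inr (Sum.inr (Sum.inl jj))) := by
  have hcond : I+1 ≤ I+1+jj.1 ∧ I+1+jj.1 ≤ J := ⟨by omega, by omega⟩
  simp only [deC]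
  rw [dif_pos hcond]
  have e1 : (⟨I+1+jj.1-(I+1), by omega⟩ : Fin (J-I)) = jj := Fin.ext (by change I+1+jj.1-(I+1) = jj.1; omega)
  rw [e1]

lemma deA_add (J I K : ℕ) (x y : Idx J I K → ℝ) :
    deA J I K (x + y) = fun k j => deA J I K x k j + deA J I K y k j := by
  funext k j
  simp only [deA]
  split_ifs <;> simp

lemma deB_add (J I K : ℕ) (x y : Idx J I K → ℝ) :
    deB J I K (x + y) = fun k => deB J I K x k + deB J I K y k := by
  funext k
  simp only [deB]
  split_ifs <;> simp

lemma deC_add (J I K : ℕ) (x y : Idx J I K → ℝ) :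
    deC J I K (x + y) = fun j => deC J I K x j + deC J I K y j := by
  funext j
  simp only [deC]
  split_ifs <;> simp

lemma deD_add (J I K : ℕ) (x y : Idx J I K → ℝ) :
    deD J I K (x + y) = deD J I K x + deD J I K y := rfl

lemma deA_smul (J I K : ℕ) (r : ℝ) (x : Idx J I K → ℝ) :
    deA J I K (r • x) = fun k j => r * deA J I K x k j := by
  funext k j
  simp only [deA]
  split_ifs <;> simp

lemma deB_smul (J I K : ℕ) (r : ℝ) (x : Idx J I K → ℝ) :
    deB J I K (r • x) = fun k => r * deB J I K x k := by
  funext k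
  simp only [deB]
  split_ifs <;> simp

lemma deC_smul (J I K : ℕ) (r : ℝ) (x : Idx J I K → ℝ) :
    deC J I K (r • x) = fun j => r * deC J I K x j := by
  funext j
  simp only [deC]
  split_ifs <;> simp

lemma deD_smul (J I K : ℕ) (r : ℝ) (x : Idx J I K → ℝ) :
    deD J I K (r • x) = r * deD J I K x := rfl

lemma UFa_add (I : ℕ) (xh : ℕ → ℝ) (a a' : ℕ → ℕ → ℝ) (b b' : ℕ → ℝ) :
    UFa I xh (fun k j => a k j + a' k j) (fun k => b k + b' k)
      = fun k j => UFa I xh a b k j + UFa I xh a' b' k j := by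
  funext k j
  simp only [UFa, uF]
  split_ifs <;> ring

lemma UCa_add (I J : ℕ) (xh : ℕ → ℝ) (c c' : ℕ → ℝ) (d d' : ℝ) :
    UCa I J xh (fun j => c j + c' j) (d + d')
      = fun j => UCa I J xh c d j + UCa I J xh c' d' j := by
  funext j
  simp only [UCa, uC]
  split_ifs <;> ring

lemma UFa_smul (I : ℕ) (xh : ℕ → ℝ) (r : ℝ) (a : ℕ → ℕ → ℝ) (b : ℕ → ℝ) :
    UFa I xh (fun k j => r * a k j) (fun k => r * b k)
      = fun k j => r * UFa I xh a b k j := by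
  funext k j
  simp only [UFa, uF]
  split_ifs <;> ring

lemma UCa_smul (I J : ℕ) (xh : ℕ → ℝ) (r : ℝ) (c : ℕ → ℝ) (d : ℝ) :
    UCa I J xh (fun j => r * c j) (r * d) = fun j => r * UCa I J xh c d j := by
  funext j
  simp only [UCa, uC]
  split_ifs <;> ring

noncomputable def Lfun (J I K : ℕ) (δt1 δt2 : ℝ) (xh : ℕ → ℝ)
    (x : Idx J I K → ℝ) : Idx J I K → ℝ :=
  fun i => match i with
  | Sum.inl (k, j) =>
      (hw xh (j.1+1) / δt1) * (deA J I K x (k.1+1) (j.1+1)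
          - (if k.1+1 = 1 then 0 else deA J I K x (k.1+1-1) (j.1+1)))
        - (UFa I xh (deA J I K x) (deB J I K x) (k.1+1) (j.1+1)
           - UFa I xh (deA J I K x) (deB J I K x) (k.1+1) (j.1+1-1))
  | Sum.inr (Sum.inl k) => deB J I K x (k.1+1) - deC J I K x (I+1)
  | Sum.inr (Sum.inr (Sum.inl jj)) =>
      (hw xh (I+1+jj.1) / δt2) * deC J I K x (I+1+jj.1)
        - (UCa I J xh (deC J I K x) (deD J I K x) (I+1+jj.1)
           - UCa I J xh (deC J I K x) (deD J I K x) (I+1+jj.1-1))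
  | Sum.inr (Sum.inr (Sum.inr _)) =>
      δt2 * UCa I J xh (deC J I K x) (deD J I K x) I
        - ∑ k ∈ Icc 1 K, δt1 * UFa I xh (deA J I K x) (deB J I K x) k I

noncomputable def Lmap (J I K : ℕ) (δt1 δt2 : ℝ) (xh : ℕ → ℝ) :
    (Idx J I K → ℝ) →ₗ[ℝ] (Idx J I K → ℝ) where
  toFun := Lfun J I K δt1 δt2 xh
  map_add' := by
    intro x y
    funext i
    rcases i with ⟨k, j⟩ | k | jj | u
    · simp only [Lfun, Pi.add_apply, deA_add, deB_add, UFa_add]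
      split_ifs <;> ring
    · simp only [Lfun, Pi.add_apply, deB_add, deC_add]
      ring
    · simp only [Lfun, Pi.add_apply, deC_add, deD_add, UCa_add]
      ring
    · simp only [Lfun, Pi.add_apply, deA_add, deB_add, deC_add, deD_add, UFa_add, UCa_add,
        mul_add, Finset.sum_add_distrib]
      ring
  map_smul' := by
    intro r x
    funext i
    rcases i with ⟨k, j⟩ | k | jj | u
    · simp only [Lfun, Pi.smul_apply, smul_eq_mul, deA_smul, deB_smul, UFa_smul, RingHom.id_apply]
      split_ifs <;> ring
    · simp only [Lfun, Pi.smul_apply, smul_eq_mul, deB_smul, deC_smul, RingHom.id_apply]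
      ring
    · simp only [Lfun, Pi.smul_apply, smul_eq_mul, deC_smul, deD_smul, UCa_smul, RingHom.id_apply]
      ring
    · simp only [Lfun, Pi.smul_apply, smul_eq_mul, deA_smul, deB_smul, deC_smul, deD_smul,
        UFa_smul, UCa_smul, RingHom.id_apply]
      have hs : ∑ k ∈ Icc 1 K, δt1 * (r * UFa I xh (deA J I K x) (deB J I K x) k I)
          = r * ∑ k ∈ Icc 1 K, δt1 * UFa I xh (deA J I K x) (deB J I K x) k I := by
        rw [Finset.mul_sum]
        exact Finset.sum_congr rfl fun k _ => by ring
      rw [hs]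
      ring

end Exist
section Exist2
open Finset

noncomputable def tvec (J I K : ℕ) (δt1 δt2 : ℝ) (xh : ℕ → ℝ) (qF qC : ℕ → ℝ)
    (g1 : ℕ → ℕ → ℝ) (g2 : ℕ → ℝ) : Idx J I K → ℝ :=
  fun i => match i with
  | Sum.inl (k, j) => hw xh (j.1+1) * g1 (k.1+1) (j.1+1)
      + (if k.1+1 = 1 then (hw xh (j.1+1)/δt1) * qF (j.1+1) else 0)
  | Sum.inr (Sum.inl _) => 0
  | Sum.inr (Sum.inr (Sum.inl jj)) => hw xh (I+1+jj.1) * g2 (I+1+jj.1)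
      + (hw xh (I+1+jj.1)/δt2) * qC (I+1+jj.1)
  | Sum.inr (Sum.inr (Sum.inr _)) => 0

lemma Lmap_apply (J I K : ℕ) (δt1 δt2 : ℝ) (xh : ℕ → ℝ) (x : Idx J I K → ℝ) :
    Lmap J I K δt1 δt2 xh x = Lfun J I K δt1 δt2 xh x := rfl

lemma step_exists (J I K : ℕ) (hI1 : 1 ≤ I) (hIJ : I < J) (hK : 1 ≤ K)
    (δt1 : ℝ) (hδt1 : 0 < δt1) (δt2 : ℝ) (hδt2 : δt2 = (K : ℝ) * δt1)
    (xh : ℕ → ℝ) (hxmono : ∀ j < J, xh j < xh (j + 1))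
    (qF qC : ℕ → ℝ) (g1 : ℕ → ℕ → ℝ) (g2 : ℕ → ℝ) :
    ∃ s : (ℕ → ℕ → ℝ) × (ℕ → ℝ) × (ℕ → ℝ) × ℝ,
      StepEqs' J I K δt1 δt2 xh qF qC g1 g2 s.1 s.2.1 s.2.2.1 s.2.2.2 := by
  have hker : ∀ x : Idx J I K → ℝ, Lmap J I K δt1 δt2 xh x = 0 → x = 0 := by
    intro x hx0
    have hrow : ∀ i, Lfun J I K δt1 δt2 xh x i = 0 := fun i => congrFun hx0 i
    have H := homog_zero J I K hI1 hIJ hK δt1 hδt1 δt2 hδt2 xh hxmono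
      (deA J I K x) (deB J I K x) (deC J I K x) (deD J I K x)
      (by
        intro k hk j hj
        obtain ⟨hk1, hk2⟩ := mem_Icc.mp hk
        obtain ⟨hj1, hj2⟩ := mem_Icc.mp hj
        have hr := hrow (Sum.inl (⟨k-1, by omega⟩, ⟨j-1, by omega⟩))
        simp only [Lfun] at hr
        have e1 : k - 1 + 1 = k := by omega
        have e2 : j - 1 + 1 = j := by omega
        rw [e1, e2] at hr
        exact hr)
      (by
        intro j hj
        obtain ⟨hj1, hj2⟩ := mem_Icc.mp hj
        have hr := hrow (Sum.inr (Sum.inr (Sum.inl ⟨j-(I+1), by omega⟩)))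
        simp only [Lfun] at hr
        have e1 : I+1+(j-(I+1)) = j := by omega
        rw [e1] at hr
        exact hr)
      (by
        have hr := hrow (Sum.inr (Sum.inr (Sum.inr ())))
        simp only [Lfun] at hr
        linarith [hr])
      (by
        intro k hk
        obtain ⟨hk1, hk2⟩ := mem_Icc.mp hk
        have hr := hrow (Sum.inr (Sum.inl ⟨k-1, by omega⟩))
        simp only [Lfun] at hr
        have e1 : k - 1 + 1 = k := by omega
        rw [e1] at hr
        linarith [hr])
    funext i
    rcases i with ⟨k, j⟩ | k | jj | u
    · have h := (H.1 (k.1+1) (mem_Icc.mpr ⟨by omega, k.2⟩)).1 (j.1+1) (mem_Icc.mpr ⟨by omega, j.2⟩)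
      rw [deA_spec] at h
      simpa using h
    · have h := (H.1 (k.1+1) (mem_Icc.mpr ⟨by omega, k.2⟩)).2
      rw [deB_spec] at h
      simpa using h
    · have h := H.2.1 (I+1+jj.1) (mem_Icc.mpr ⟨by omega, by have := jj.2; omega⟩)
      rw [deC_spec] at h
      simpa using h
    · have h := H.2.2
      simpa [deD] using h
  have hinj : Function.Injective (Lmap J I K δt1 δt2 xh) :=
    (injective_iff_map_eq_zero _).mpr hker
  have hsurj := LinearMap.injective_iff_surjective.mp hinj
  obtain ⟨x, hxsol⟩ := hsurj (tvec J I K δt1 δt2 xh qF qC g1 g2)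
  rw [Lmap_apply] at hxsol
  refine ⟨(deA J I K x, deB J I K x, deC J I K x, deD J I K x), ?_, ?_, ?_, ?_⟩
  · intro k hk j hj
    obtain ⟨hk1, hk2⟩ := mem_Icc.mp hk
    obtain ⟨hj1, hj2⟩ := mem_Icc.mp hj
    have hr : Lfun J I K δt1 δt2 xh x (Sum.inl (⟨k-1, by omega⟩, ⟨j-1, by omega⟩))
        = tvec J I K δt1 δt2 xh qF qC g1 g2 (Sum.inl (⟨k-1, by omega⟩, ⟨j-1, by omega⟩)) :=
      congrFun hxsol _
    simp only [Lfun, tvec] at hr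
    have e1 : k - 1 + 1 = k := by omega
    have e2 : j - 1 + 1 = j := by omega
    rw [e1, e2] at hr
    by_cases hk1' : k = 1
    · simp only [if_pos hk1'] at hr ⊢
      linear_combination hr
    · simp only [if_neg hk1'] at hr ⊢
      linear_combination hr
  · intro j hj
    obtain ⟨hj1, hj2⟩ := mem_Icc.mp hj
    have hr : Lfun J I K δt1 δt2 xh x (Sum.inr (Sum.inr (Sum.inl ⟨j-(I+1), by omega⟩)))
        = tvec J I K δt1 δt2 xh qF qC g1 g2 (Sum.inr (Sum.inr (Sum.inl ⟨j-(I+1), by omega⟩))) :=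
      congrFun hxsol _
    simp only [Lfun, tvec] at hr
    have e1 : I+1+(j-(I+1)) = j := by omega
    rw [e1] at hr
    linear_combination hr
  · have hr : Lfun J I K δt1 δt2 xh x (Sum.inr (Sum.inr (Sum.inr ())))
        = tvec J I K δt1 δt2 xh qF qC g1 g2 (Sum.inr (Sum.inr (Sum.inr ()))) :=
      congrFun hxsol _
    simp only [Lfun, tvec] at hr
    linarith [hr]
  · intro k hk
    obtain ⟨hk1, hk2⟩ := mem_Icc.mp hk
    have hr : Lfun J I K δt1 δt2 xh x (Sum.inr (Sum.inl ⟨k-1, by omega⟩))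
        = tvec J I K δt1 δt2 xh qF qC g1 g2 (Sum.inr (Sum.inl ⟨k-1, by omega⟩)) :=
      congrFun hxsol _
    simp only [Lfun, tvec] at hr
    have e1 : k - 1 + 1 = k := by omega
    rw [e1] at hr
    linarith [hr]

end Exist2
section Main
open Finset

lemma scheme_to_step (J I K N2 : ℕ) (δt1 δt2 : ℝ) (xh : ℕ → ℝ)
    (p0 : ℕ → ℝ) (f1 : ℕ → ℕ → ℕ → ℝ) (f2 : ℕ → ℕ → ℝ)
    (p1 : ℕ → ℕ → ℕ → ℝ) (p2 : ℕ → ℕ → ℝ) (r1 : ℕ → ℕ → ℝ) (r2 : ℕ → ℝ)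
    (hS : SchemeEqs J I K N2 δt1 δt2 xh p0 f1 f2 p1 p2 r1 r2)
    (hI : InterfaceCoarseFluxOverlap J I K N2 δt1 δt2 xh p1 p2 r1 r2)
    (n : ℕ) (hn : n ∈ Icc 1 N2) :
    StepEqs' J I K δt1 δt2 xh (fun j => prevF K p0 p1 n 1 j) (fun j => prevC p0 p2 n j)
      (f1 n) (f2 n) (p1 n) (r1 n) (p2 n) (r2 n) := by
  obtain ⟨hS1, hS2⟩ := hS
  obtain ⟨hx, hm⟩ := hI n hn
  refine ⟨?_, ?_, hx, hm⟩
  · intro k hk j hj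
    have h := hS1 n hn k hk j hj
    have hprev : prevF K p0 p1 n k j
        = (if k = 1 then prevF K p0 p1 n 1 j else p1 n (k-1) j) := by
      simp only [prevF]
      by_cases h1 : k = 1 <;> simp [h1]
    rw [hprev] at h
    exact h
  · intro j hj
    exact hS2 n hn j hj

/-- Well-posedness of the overlapping scheme with coarse-flux/fine-pressure matching:
for every choice of sources and initial values, the resulting finite linear system has
exactly one solution `(p_j^{n,k}` for `j ≤ I`, `p_j^{n}` for `j > I`, `p_{I+1}^{n,k}`,
`p_I^{n})`. -/
theorem wellposed_overlap_coarse_flux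
    (J I K N2 : ℕ) (hJ : 3 ≤ J) (hI1 : 1 ≤ I) (hIJ : I < J) (hK : 1 ≤ K) (hN2 : 1 ≤ N2)
    (δt1 : ℝ) (hδt1 : 0 < δt1) (δt2 : ℝ) (hδt2 : δt2 = (K : ℝ) * δt1)
    (xh : ℕ → ℝ) (hx0 : xh 0 = 0) (hxmono : ∀ j < J, xh j < xh (j + 1))
    (p0 : ℕ → ℝ) (f1 : ℕ → ℕ → ℕ → ℝ) (f2 : ℕ → ℕ → ℝ) :
    (∃ p1 p2 r1 r2,
        SchemeEqs J I K N2 δt1 δt2 xh p0 f1 f2 p1 p2 r1 r2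
        ∧ InterfaceCoarseFluxOverlap J I K N2 δt1 δt2 xh p1 p2 r1 r2)
    ∧ ∀ p1 p2 r1 r2 p1' p2' r1' r2',
        SchemeEqs J I K N2 δt1 δt2 xh p0 f1 f2 p1 p2 r1 r2 →
        InterfaceCoarseFluxOverlap J I K N2 δt1 δt2 xh p1 p2 r1 r2 →
        SchemeEqs J I K N2 δt1 δt2 xh p0 f1 f2 p1' p2' r1' r2' →
        InterfaceCoarseFluxOverlap J I K N2 δt1 δt2 xh p1' p2' r1' r2' →
        ∀ n ∈ Icc 1 N2,
          (∀ k ∈ Icc 1 K, (∀ j ∈ Icc 1 I, p1 n k j = p1' n k j) ∧ r1 n k = r1' n k)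
          ∧ (∀ j ∈ Icc (I + 1) J, p2 n j = p2' n j) ∧ r2 n = r2' n := by
  constructor
  · -- existence
    obtain ⟨sol, hsol0, hsolS⟩ : ∃ sol : ℕ → ((ℕ → ℕ → ℝ) × (ℕ → ℝ) × (ℕ → ℝ) × ℝ),
        sol 0 = (fun _ j => p0 j, fun _ => (0:ℝ), fun j => p0 j, (0:ℝ))
        ∧ ∀ n, StepEqs' J I K δt1 δt2 xh
            (fun j => (sol n).1 K j) (fun j => (sol n).2.2.1 j)
            (f1 (n+1)) (f2 (n+1))
            (sol (n+1)).1 (sol (n+1)).2.1 (sol (n+1)).2.2.1 (sol (n+1)).2.2.2 := by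
      set pick : ((ℕ → ℕ → ℝ) × (ℕ → ℝ) × (ℕ → ℝ) × ℝ) → ℕ → ((ℕ → ℕ → ℝ) × (ℕ → ℝ) × (ℕ → ℝ) × ℝ) :=
        fun prev n => Classical.choose (step_exists J I K hI1 hIJ hK δt1 hδt1 δt2 hδt2 xh hxmono
          (fun j => prev.1 K j) (fun j => prev.2.2.1 j) (f1 (n+1)) (f2 (n+1))) with hpick
      have hpickS : ∀ prev n, StepEqs' J I K δt1 δt2 xh (fun j => prev.1 K j) (fun j => prev.2.2.1 j)
          (f1 (n+1)) (f2 (n+1)) (pick prev n).1 (pick prev n).2.1 (pick prev n).2.2.1 (pick prev n).2.2.2 :=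
        fun prev n => Classical.choose_spec (step_exists J I K hI1 hIJ hK δt1 hδt1 δt2 hδt2 xh hxmono
          (fun j => prev.1 K j) (fun j => prev.2.2.1 j) (f1 (n+1)) (f2 (n+1)))
      refine ⟨fun n => Nat.rec (fun _ j => p0 j, fun _ => (0:ℝ), fun j => p0 j, (0:ℝ))
        (fun n prev => pick prev n) n, rfl, ?_⟩
      intro n
      exact hpickS _ n
    refine ⟨fun n => (sol n).1, fun n => (sol n).2.2.1, fun n => (sol n).2.1,
      fun n => (sol n).2.2.2, ⟨?_, ?_⟩, ?_⟩
    · intro n hn k hk j hj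
      obtain ⟨hn1, hn2⟩ := mem_Icc.mp hn
      obtain ⟨m, rfl⟩ : ∃ m, n = m + 1 := ⟨n-1, by omega⟩
      have h := (hsolS m).1 k hk j hj
      have hq : prevF K p0 (fun n => (sol n).1) (m+1) k j
          = (if k = 1 then (sol m).1 K j else (sol (m+1)).1 (k-1) j) := by
        simp only [prevF]
        by_cases h1 : k = 1
        · simp only [if_pos h1]
          by_cases hm0 : m = 0
          · subst hm0; simp [hsol0]
          · rw [if_neg (by omega : ¬ m + 1 = 1)]
            simp
        · simp [h1]
      rw [hq]
      exact h
    · intro n hn j hj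
      obtain ⟨hn1, hn2⟩ := mem_Icc.mp hn
      obtain ⟨m, rfl⟩ : ∃ m, n = m + 1 := ⟨n-1, by omega⟩
      have h := (hsolS m).2.1 j hj
      have hq : prevC p0 (fun n => (sol n).2.2.1) (m+1) j = (sol m).2.2.1 j := by
        simp only [prevC]
        by_cases hm0 : m = 0
        · subst hm0; simp [hsol0]
        · rw [if_neg (by omega : ¬ m + 1 = 1)]
          simp
      rw [hq]
      exact h
    · intro n hn
      obtain ⟨hn1, hn2⟩ := mem_Icc.mp hn
      obtain ⟨m, rfl⟩ : ∃ m, n = m + 1 := ⟨n-1, by omega⟩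
      exact ⟨(hsolS m).2.2.1, (hsolS m).2.2.2⟩
  · -- uniqueness
    intro p1 p2 r1 r2 p1' p2' r1' r2' hS hI hS' hI'
    have main : ∀ n, 1 ≤ n → n ≤ N2 →
        (∀ k ∈ Icc 1 K, (∀ j ∈ Icc 1 I, p1 n k j = p1' n k j) ∧ r1 n k = r1' n k)
          ∧ (∀ j ∈ Icc (I + 1) J, p2 n j = p2' n j) ∧ r2 n = r2' n := by
      intro n
      induction n using Nat.strong_induction_on with
      | _ n ih =>
        intro hn1 hn2
        have hmem : n ∈ Icc 1 N2 := mem_Icc.mpr ⟨hn1, hn2⟩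
        have hstep := scheme_to_step J I K N2 δt1 δt2 xh p0 f1 f2 p1 p2 r1 r2 hS hI n hmem
        have hstep' := scheme_to_step J I K N2 δt1 δt2 xh p0 f1 f2 p1' p2' r1' r2' hS' hI' n hmem
        have hqF : ∀ j ∈ Icc 1 I, prevF K p0 p1 n 1 j = prevF K p0 p1' n 1 j := by
          intro j hj
          simp only [prevF, if_pos rfl]
          by_cases h1 : n = 1
          · simp [h1]
          · rw [if_neg h1, if_neg h1]
            have hprev := ih (n-1) (by omega) (by omega) (by omega)
            exact (hprev.1 K (mem_Icc.mpr ⟨hK, le_refl K⟩)).1 j hj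
        have hqC : ∀ j ∈ Icc (I+1) J, prevC p0 p2 n j = prevC p0 p2' n j := by
          intro j hj
          simp only [prevC]
          by_cases h1 : n = 1
          · simp [h1]
          · rw [if_neg h1, if_neg h1]
            have hprev := ih (n-1) (by omega) (by omega) (by omega)
            exact hprev.2.1 j hj
        exact step_unique J I K hI1 hIJ hK δt1 hδt1 δt2 hδt2 xh hxmono
          _ _ _ _ (f1 n) (f2 n) _ _ _ _ _ _ _ _ hqF hqC hstep hstep'
    intro n hn
    obtain ⟨hn1, hn2⟩ := mem_Icc.mp hn
    exact main n hn1 hn2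

end Main
end

section
/- Well-posedness of the overlapping scheme with fine-flux/coarse-pressure matching: augment the one-dimensional composite finite volume scheme with additional unknowns p_{I+1}^{n,k} (k = 1,…,𝒦) and p_I^{n} (n = 1,…,N₂), interface fluxes u_{I+1/2}^{n,k} = (p_{I+1}^{n,k} − p_I^{n,k})/(x_{I+1} − x_I) and u_{I+1/2}^{n} = (p_{I+1}^{n} − p_I^{n})/(x_{I+1} − x_I), and interface conditions, for every n: u_{I+1/2}^{n,k} = u_{I+1/2}^{n} for all k and δt₂ p_I^{n} = Σ_{k=1}^{𝒦} δt₁ p_I^{n,k}. Then for every choice of sources f_j^{n,k}, f_j^{n} and initial values p_j^0, the resulting finite linear system has exactly one solution (p_j^{n,k} for j ≤ I, p_j^{n} for j > I, p_{I+1}^{n,k}, p_I^{n}). -/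
open Finset

/-- Interface conditions of the overlapping scheme with fine-flux/coarse-pressure
matching: `u_{I+1/2}^{n,k} = u_{I+1/2}^{n}` for all `k` and
`δt₂ p_I^{n} = ∑_{k=1}^{𝒦} δt₁ p_I^{n,k}`. -/
def InterfaceFineFluxOverlap (J I K N2 : ℕ) (δt1 δt2 : ℝ) (xh : ℕ → ℝ)
    (p1 : ℕ → ℕ → ℕ → ℝ) (p2 : ℕ → ℕ → ℝ) (r1 : ℕ → ℕ → ℝ) (r2 : ℕ → ℝ) : Prop :=
  ∀ n ∈ Icc 1 N2,
    (∀ k ∈ Icc 1 K, uF I xh p1 r1 n k I = uC I J xh p2 r2 n I)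
    ∧ δt2 * r2 n = ∑ k ∈ Icc 1 K, δt1 * p1 n k I

namespace CFVAux

/-- Abel summation on `Icc (m+1) M`. -/
lemma abel_sum (u a : ℕ → ℝ) (m M : ℕ) (hmM : m < M) :
    ∑ j ∈ Icc (m+1) M, (u j - u (j-1)) * a j
      = u M * a M - u m * a (m+1) - ∑ j ∈ Icc (m+1) (M-1), u j * (a (j+1) - a j) := by
  induction M, hmM using Nat.le_induction with
  | base =>
      simp [Icc_self]
      ring
  | succ M hM ih =>
      rw [Finset.sum_Icc_succ_top (by omega : m+1 ≤ M+1)]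
      have h1 : M + 1 - 1 = M := by omega
      rw [h1, ih]
      have hsplit : ∑ j ∈ Icc (m+1) M, u j * (a (j+1) - a j)
          = (∑ j ∈ Icc (m+1) (M-1), u j * (a (j+1) - a j)) + u M * (a (M+1) - a M) := by
        obtain ⟨M', rfl⟩ : ∃ M', M = M' + 1 := ⟨M-1, by omega⟩
        rw [Finset.sum_Icc_succ_top (by omega : m+1 ≤ M'+1)]
        simp
      rw [hsplit]
      ring

/-- Discrete time-derivative energy lower bound. -/
lemma time_energy (g : ℕ → ℝ) (K : ℕ) (hK : 1 ≤ K) :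
    0 ≤ ∑ k ∈ Icc 1 K, (g k - (if k = 1 then 0 else g (k-1))) * g k := by
  have main : ∀ K, 1 ≤ K → (g K)^2/2 ≤ ∑ k ∈ Icc 1 K, (g k - (if k = 1 then 0 else g (k-1))) * g k := by
    intro K hK
    induction K, hK using Nat.le_induction with
    | base => simp; nlinarith [sq_nonneg (g 1)]
    | succ K hK ih =>
        rw [Finset.sum_Icc_succ_top (by omega : 1 ≤ K+1)]
        have : ¬ (K+1 = 1) := by omega
        rw [if_neg this]
        have h1 : K + 1 - 1 = K := by omega
        rw [h1]
        nlinarith [sq_nonneg (g (K+1) - g K)]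
  have := main K hK
  nlinarith [sq_nonneg (g K)]

/-- Chain: if `a 1 = 0` and consecutive values are equal up to `I`, all are zero. -/
lemma chain_zero (a : ℕ → ℝ) (I : ℕ) (h1 : a 1 = 0)
    (hstep : ∀ j ∈ Icc 1 (I-1), a (j+1) = a j) :
    ∀ j ∈ Icc 1 I, a j = 0 := by
  intro j hj
  simp only [mem_Icc] at hj
  obtain ⟨hj1, hjI⟩ := hj
  induction j, hj1 using Nat.le_induction with
  | base => exact h1
  | succ j hj ih =>
      have := hstep j (by simp only [mem_Icc]; omega)
      rw [this, ih (by omega)]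



noncomputable def fu (xh : ℕ → ℝ) (A : ℕ → ℕ → ℝ) (k j : ℕ) : ℝ :=
  if j = 0 then A k 1 / (xc xh 1 - xh 0)
  else (A k (j+1) - A k j) / (xc xh (j+1) - xc xh j)

noncomputable def fv (J : ℕ) (xh : ℕ → ℝ) (B : ℕ → ℝ) (j : ℕ) : ℝ :=
  if j = J then -(B J) / (xh J - xc xh J)
  else (B (j+1) - B j) / (xc xh (j+1) - xc xh j)

def Step (J I K : ℕ) (δt1 δt2 : ℝ) (xh : ℕ → ℝ) (q qc : ℕ → ℝ)
    (g1 : ℕ → ℕ → ℝ) (g2 : ℕ → ℝ) (A : ℕ → ℕ → ℝ) (B : ℕ → ℝ) : Prop :=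
  (∀ k ∈ Icc 1 K, ∀ j ∈ Icc 1 I,
    (hw xh j / δt1) * (A k j - (if k = 1 then q j else A (k-1) j))
      - (fu xh A k j - fu xh A k (j-1)) = hw xh j * g1 k j)
  ∧ (∀ j ∈ Icc (I+1) J,
    (hw xh j / δt2) * (B j - qc j) - (fv J xh B j - fv J xh B (j-1)) = hw xh j * g2 j)
  ∧ (∀ k ∈ Icc 1 K, fu xh A k I = fv J xh B I)
  ∧ δt2 * B I = ∑ k ∈ Icc 1 K, δt1 * A k I

section Hom

variable {J I K : ℕ} {δt1 δt2 : ℝ} {xh : ℕ → ℝ}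

lemma hd0 (hJ : 1 ≤ J) (hxmono : ∀ j < J, xh j < xh (j+1)) : 0 < xc xh 1 - xh 0 := by
  have := hxmono 0 (by omega)
  simp only [xc]
  norm_num
  linarith

lemma hdj (hxmono : ∀ j < J, xh j < xh (j+1)) {j : ℕ} (h1 : 1 ≤ j) (h2 : j + 1 ≤ J) :
    0 < xc xh (j+1) - xc xh j := by
  have e1 := hxmono (j-1) (by omega)
  have e2 := hxmono j (by omega)
  have hj1 : j - 1 + 1 = j := by omega
  rw [hj1] at e1
  simp only [xc, Nat.add_sub_cancel]
  linarith

lemma hdJ (hJ : 1 ≤ J) (hxmono : ∀ j < J, xh j < xh (j+1)) : 0 < xh J - xc xh J := by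
  have := hxmono (J-1) (by omega)
  have : xh (J-1) < xh J := by
    have h := hxmono (J-1) (by omega)
    have : J - 1 + 1 = J := by omega
    rwa [this] at h
  simp only [xc]
  linarith

lemma hhw (hxmono : ∀ j < J, xh j < xh (j+1)) {j : ℕ} (h1 : 1 ≤ j) (h2 : j ≤ J) :
    0 < hw xh j := by
  have h := hxmono (j-1) (by omega)
  have hj1 : j - 1 + 1 = j := by omega
  rw [hj1] at h
  simp only [hw]
  linarith

lemma hom_zero (hI1 : 1 ≤ I) (hIJ : I < J) (hK : 1 ≤ K)
    (hδt1 : 0 < δt1) (hδt2 : 0 < δt2)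
    (hxmono : ∀ j < J, xh j < xh (j+1))
    (A : ℕ → ℕ → ℝ) (B : ℕ → ℝ)
    (hS : Step J I K δt1 δt2 xh (fun _ => 0) (fun _ => 0) (fun _ _ => 0) (fun _ => 0) A B) :
    (∀ k ∈ Icc 1 K, ∀ j ∈ Icc 1 (I+1), A k j = 0) ∧ (∀ j ∈ Icc I J, B j = 0) := by
  obtain ⟨hF, hG, hM, hSm⟩ := hS
  have hJ1 : 1 ≤ J := by omega
  have hd0' := hd0 hJ1 hxmono
  have hdJ' := hdJ hJ1 hxmono
  have hδ1ne : δt1 ≠ 0 := ne_of_gt hδt1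
  have hδ2ne : δt2 ≠ 0 := ne_of_gt hδt2
  set V : ℝ := fv J xh B I with hV
  have hVformula : V = (B (I+1) - B I) / (xc xh (I+1) - xc xh I) := by
    rw [hV, fv, if_neg (by omega : ¬ I = J)]
  -- per-cell fine energy identity
  have keyF : ∀ k ∈ Icc 1 K, ∀ j ∈ Icc 1 I,
      hw xh j * ((A k j - (if k = 1 then 0 else A (k-1) j)) * A k j)
        = δt1 * ((fu xh A k j - fu xh A k (j-1)) * A k j) := by
    intro k hk j hj
    have h := hF k hk j hj
    simp only [mul_zero] at h
    have h2 : hw xh j * (A k j - (if k = 1 then 0 else A (k-1) j))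
        = δt1 * (fu xh A k j - fu xh A k (j-1)) := by
      have := sub_eq_zero.mp h
      field_simp at this
      linarith [this]
    calc hw xh j * ((A k j - (if k = 1 then 0 else A (k-1) j)) * A k j)
        = (hw xh j * (A k j - (if k = 1 then 0 else A (k-1) j))) * A k j := by ring
      _ = (δt1 * (fu xh A k j - fu xh A k (j-1))) * A k j := by rw [h2]
      _ = δt1 * ((fu xh A k j - fu xh A k (j-1)) * A k j) := by ring
  -- fine Abel identity per k
  have abelF : ∀ k ∈ Icc 1 K,
      ∑ j ∈ Icc 1 I, (fu xh A k j - fu xh A k (j-1)) * A k j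
        = V * A k I - A k 1 * A k 1 / (xc xh 1 - xh 0)
          - ∑ j ∈ Icc 1 (I-1), (A k (j+1) - A k j) * (A k (j+1) - A k j)
              / (xc xh (j+1) - xc xh j) := by
    intro k hk
    have h := abel_sum (fu xh A k) (A k) 0 I (by omega)
    simp only [Nat.zero_add] at h
    rw [h, hM k hk]
    have h0 : fu xh A k 0 = A k 1 / (xc xh 1 - xh 0) := by rw [fu, if_pos rfl]
    rw [h0]
    have hcong : ∑ j ∈ Icc 1 (I-1), fu xh A k j * (A k (j+1) - A k j)
        = ∑ j ∈ Icc 1 (I-1), (A k (j+1) - A k j) * (A k (j+1) - A k j)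
            / (xc xh (j+1) - xc xh j) := by
      apply Finset.sum_congr rfl
      intro j hj
      simp only [mem_Icc] at hj
      rw [fu, if_neg (by omega : ¬ j = 0)]
      ring
    rw [hcong]
    ring
  -- coarse per-cell energy identity
  have keyC : ∀ j ∈ Icc (I+1) J,
      hw xh j * (B j * B j) = δt2 * ((fv J xh B j - fv J xh B (j-1)) * B j) := by
    intro j hj
    have h := hG j hj
    simp only [mul_zero, sub_zero] at h
    have h2 : hw xh j * B j = δt2 * (fv J xh B j - fv J xh B (j-1)) := by
      have := sub_eq_zero.mp h
      field_simp at this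
      linarith [this]
    calc hw xh j * (B j * B j) = (hw xh j * B j) * B j := by ring
      _ = (δt2 * (fv J xh B j - fv J xh B (j-1))) * B j := by rw [h2]
      _ = δt2 * ((fv J xh B j - fv J xh B (j-1)) * B j) := by ring
  -- coarse Abel identity
  have abelC : ∑ j ∈ Icc (I+1) J, (fv J xh B j - fv J xh B (j-1)) * B j
      = -(B J * B J / (xh J - xc xh J)) - V * B (I+1)
        - ∑ j ∈ Icc (I+1) (J-1), (B (j+1) - B j) * (B (j+1) - B j)
            / (xc xh (j+1) - xc xh j) := by
    have h := abel_sum (fv J xh B) B I J hIJ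
    rw [h]
    have hJv : fv J xh B J = -(B J) / (xh J - xc xh J) := by rw [fv, if_pos rfl]
    rw [hJv]
    have hcong : ∑ j ∈ Icc (I+1) (J-1), fv J xh B j * (B (j+1) - B j)
        = ∑ j ∈ Icc (I+1) (J-1), (B (j+1) - B j) * (B (j+1) - B j)
            / (xc xh (j+1) - xc xh j) := by
      apply Finset.sum_congr rfl
      intro j hj
      simp only [mem_Icc] at hj
      rw [fv, if_neg (by omega : ¬ j = J)]
      ring
    rw [hcong, ← hV]
    ring
  -- global quantities
  set E1 : ℝ := ∑ k ∈ Icc 1 K, ∑ j ∈ Icc 1 I,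
      hw xh j * ((A k j - (if k = 1 then 0 else A (k-1) j)) * A k j) with hE1def
  set SA : ℝ := ∑ k ∈ Icc 1 K, (A k 1 * A k 1 / (xc xh 1 - xh 0)
      + ∑ j ∈ Icc 1 (I-1), (A k (j+1) - A k j) * (A k (j+1) - A k j)
          / (xc xh (j+1) - xc xh j)) with hSAdef
  set E2 : ℝ := ∑ j ∈ Icc (I+1) J, hw xh j * (B j * B j) with hE2def
  set SB : ℝ := ∑ j ∈ Icc (I+1) (J-1), (B (j+1) - B j) * (B (j+1) - B j)
      / (xc xh (j+1) - xc xh j) with hSBdef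
  set QJ : ℝ := B J * B J / (xh J - xc xh J) with hQJdef
  set QI : ℝ := (B (I+1) - B I) * (B (I+1) - B I) / (xc xh (I+1) - xc xh I) with hQIdef
  -- fine energy balance
  have hE1eq : E1 + δt1 * SA = δt2 * (V * B I) := by
    have step1 : E1 = δt1 * ∑ k ∈ Icc 1 K,
        (V * A k I - A k 1 * A k 1 / (xc xh 1 - xh 0)
          - ∑ j ∈ Icc 1 (I-1), (A k (j+1) - A k j) * (A k (j+1) - A k j)
              / (xc xh (j+1) - xc xh j)) := by
      rw [hE1def, Finset.mul_sum]
      apply Finset.sum_congr rfl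
      intro k hk
      rw [← abelF k hk, Finset.mul_sum]
      apply Finset.sum_congr rfl
      intro j hj
      exact keyF k hk j hj
    have step2 : ∑ k ∈ Icc 1 K, δt1 * A k I = δt2 * B I := hSm.symm
    have step3 : δt1 * ∑ k ∈ Icc 1 K, (V * A k I) = V * (δt2 * B I) := by
      rw [← step2, Finset.mul_sum, Finset.mul_sum]
      apply Finset.sum_congr rfl
      intro k _
      ring
    rw [step1, hSAdef, Finset.sum_sub_distrib, Finset.sum_sub_distrib,
      Finset.sum_add_distrib]
    linear_combination step3
  -- coarse energy balance
  have hE2eq : E2 + δt2 * QJ + δt2 * SB = -(δt2 * (V * B (I+1))) := by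
    have step1 : E2 = δt2 * (-(QJ) - V * B (I+1) - SB) := by
      rw [hE2def, ← abelC, Finset.mul_sum]
      · apply Finset.sum_congr rfl
        intro j hj
        exact keyC j hj
    rw [step1]
    ring
  -- interface term
  have hQI : δt2 * (V * (B (I+1) - B I)) = δt2 * QI := by
    rw [hVformula, hQIdef]
    ring
  -- total balance
  have total : E1 + δt1 * SA + E2 + δt2 * QJ + δt2 * SB + δt2 * QI = 0 := by
    have := hQI
    nlinarith [hE1eq, hE2eq, hQI]
  -- nonnegativity of all terms
  have dI_pos : 0 < xc xh (I+1) - xc xh I := hdj hxmono hI1 (by omega)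
  have hE1nn : 0 ≤ E1 := by
    rw [hE1def, Finset.sum_comm]
    apply Finset.sum_nonneg
    intro j hj
    simp only [mem_Icc] at hj
    have hhj := hhw hxmono hj.1 (by omega)
    have ht := time_energy (fun k => A k j) K hK
    rw [← Finset.mul_sum]
    exact mul_nonneg hhj.le ht
  have SAtermnn : ∀ k ∈ Icc 1 K, 0 ≤ A k 1 * A k 1 / (xc xh 1 - xh 0)
      + ∑ j ∈ Icc 1 (I-1), (A k (j+1) - A k j) * (A k (j+1) - A k j)
          / (xc xh (j+1) - xc xh j) := by
    intro k _
    have h1 : 0 ≤ A k 1 * A k 1 / (xc xh 1 - xh 0) :=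
      div_nonneg (mul_self_nonneg _) hd0'.le
    have h2 : 0 ≤ ∑ j ∈ Icc 1 (I-1), (A k (j+1) - A k j) * (A k (j+1) - A k j)
        / (xc xh (j+1) - xc xh j) := by
      apply Finset.sum_nonneg
      intro j hj
      simp only [mem_Icc] at hj
      exact div_nonneg (mul_self_nonneg _) (hdj hxmono hj.1 (by omega)).le
    linarith
  have hSAnn : 0 ≤ SA := Finset.sum_nonneg SAtermnn
  have hE2termnn : ∀ j ∈ Icc (I+1) J, 0 ≤ hw xh j * (B j * B j) := by
    intro j hj
    simp only [mem_Icc] at hj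
    exact mul_nonneg (hhw hxmono (by omega) hj.2).le (mul_self_nonneg _)
  have hE2nn : 0 ≤ E2 := Finset.sum_nonneg hE2termnn
  have hSBtermnn : ∀ j ∈ Icc (I+1) (J-1),
      0 ≤ (B (j+1) - B j) * (B (j+1) - B j) / (xc xh (j+1) - xc xh j) := by
    intro j hj
    simp only [mem_Icc] at hj
    exact div_nonneg (mul_self_nonneg _) (hdj hxmono (by omega) (by omega)).le
  have hSBnn : 0 ≤ SB := Finset.sum_nonneg hSBtermnn
  have hQJnn : 0 ≤ QJ := div_nonneg (mul_self_nonneg _) hdJ'.le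
  have hQInn : 0 ≤ QI := div_nonneg (mul_self_nonneg _) dI_pos.le
  -- each group vanishes
  have m1 : 0 ≤ δt1 * SA := mul_nonneg hδt1.le hSAnn
  have m2 : 0 ≤ δt2 * SB := mul_nonneg hδt2.le hSBnn
  have m3 : 0 ≤ δt2 * QJ := mul_nonneg hδt2.le hQJnn
  have m4 : 0 ≤ δt2 * QI := mul_nonneg hδt2.le hQInn
  have hSA0 : SA = 0 := by
    have h5 : δt1 * SA = 0 := by linarith
    rcases mul_eq_zero.mp h5 with h | h
    · exact absurd h hδ1ne
    · exact h
  have hE20 : E2 = 0 := by linarith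
  have hQI0 : QI = 0 := by
    have h5 : δt2 * QI = 0 := by linarith
    rcases mul_eq_zero.mp h5 with h | h
    · exact absurd h hδ2ne
    · exact h
  -- extraction: fine values vanish
  have hAzero : ∀ k ∈ Icc 1 K, ∀ j ∈ Icc 1 I, A k j = 0 := by
    intro k hk
    have hterm := (Finset.sum_eq_zero_iff_of_nonneg SAtermnn).mp hSA0 k hk
    have h1 : 0 ≤ A k 1 * A k 1 / (xc xh 1 - xh 0) :=
      div_nonneg (mul_self_nonneg _) hd0'.le
    have h2nn : ∀ j ∈ Icc 1 (I-1),
        0 ≤ (A k (j+1) - A k j) * (A k (j+1) - A k j) / (xc xh (j+1) - xc xh j) := by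
      intro j hj
      simp only [mem_Icc] at hj
      exact div_nonneg (mul_self_nonneg _) (hdj hxmono hj.1 (by omega)).le
    have h2 : 0 ≤ ∑ j ∈ Icc 1 (I-1), (A k (j+1) - A k j) * (A k (j+1) - A k j)
        / (xc xh (j+1) - xc xh j) := Finset.sum_nonneg h2nn
    have ha : A k 1 * A k 1 / (xc xh 1 - xh 0) = 0 := by linarith
    have hb : ∑ j ∈ Icc 1 (I-1), (A k (j+1) - A k j) * (A k (j+1) - A k j)
        / (xc xh (j+1) - xc xh j) = 0 := by linarith
    have hA1 : A k 1 = 0 := by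
      have := (div_eq_zero_iff.mp ha).resolve_right (ne_of_gt hd0')
      exact mul_self_eq_zero.mp this
    have hstep : ∀ j ∈ Icc 1 (I-1), A k (j+1) = A k j := by
      intro j hj
      have hz := (Finset.sum_eq_zero_iff_of_nonneg h2nn).mp hb j hj
      simp only [mem_Icc] at hj
      have hd := hdj hxmono hj.1 (by omega)
      have := (div_eq_zero_iff.mp hz).resolve_right (ne_of_gt hd)
      have := mul_self_eq_zero.mp this
      linarith [sub_eq_zero.mp this]
    exact chain_zero (A k) I hA1 hstep
  -- coarse values vanish
  have hBzero : ∀ j ∈ Icc (I+1) J, B j = 0 := by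
    intro j hj
    have hz := (Finset.sum_eq_zero_iff_of_nonneg hE2termnn).mp hE20 j hj
    simp only [mem_Icc] at hj
    rcases mul_eq_zero.mp hz with h | h
    · exact absurd h (ne_of_gt (hhw hxmono (by omega) hj.2))
    · exact mul_self_eq_zero.mp h
  have hBI1 : B (I+1) = 0 := hBzero (I+1) (mem_Icc.mpr ⟨le_refl _, by omega⟩)
  have hdiff : B (I+1) - B I = 0 := by
    have := (div_eq_zero_iff.mp hQI0).resolve_right (ne_of_gt dI_pos)
    exact mul_self_eq_zero.mp this
  have hBI : B I = 0 := by linarith [sub_eq_zero.mp hdiff]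
  have hV0 : V = 0 := by rw [hVformula, hdiff, zero_div]
  have hAI1 : ∀ k ∈ Icc 1 K, A k (I+1) = 0 := by
    intro k hk
    have hm := hM k hk
    rw [fu, if_neg (by omega : ¬ I = 0)] at hm
    have := (div_eq_zero_iff.mp (hm.trans hV0)).resolve_right (ne_of_gt dI_pos)
    have hAI := hAzero k hk I (mem_Icc.mpr ⟨hI1, le_refl I⟩)
    linarith [sub_eq_zero.mp this]
  constructor
  · intro k hk j hj
    simp only [mem_Icc] at hj
    by_cases hjI : j ≤ I
    · exact hAzero k hk j (mem_Icc.mpr ⟨hj.1, hjI⟩)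
    · have hj1 : j = I + 1 := by omega
      rw [hj1]
      exact hAI1 k hk
  · intro j hj
    simp only [mem_Icc] at hj
    by_cases hjI : j = I
    · rw [hjI]; exact hBI
    · exact hBzero j (mem_Icc.mpr ⟨by omega, hj.2⟩)

end Hom

lemma fu_add (xh : ℕ → ℝ) (F G : ℕ → ℕ → ℝ) (k j : ℕ) :
    fu xh (fun a b => F a b + G a b) k j = fu xh F k j + fu xh G k j := by
  unfold fu; split_ifs <;> ring

lemma fu_smul (xh : ℕ → ℝ) (c : ℝ) (F : ℕ → ℕ → ℝ) (k j : ℕ) :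
    fu xh (fun a b => c * F a b) k j = c * fu xh F k j := by
  unfold fu; split_ifs <;> ring

lemma fu_sub (xh : ℕ → ℝ) (F G : ℕ → ℕ → ℝ) (k j : ℕ) :
    fu xh (fun a b => F a b - G a b) k j = fu xh F k j - fu xh G k j := by
  unfold fu; split_ifs <;> ring

lemma fv_add (J : ℕ) (xh : ℕ → ℝ) (F G : ℕ → ℝ) (j : ℕ) :
    fv J xh (fun a => F a + G a) j = fv J xh F j + fv J xh G j := by
  unfold fv; split_ifs <;> ring

lemma fv_smul (J : ℕ) (xh : ℕ → ℝ) (c : ℝ) (F : ℕ → ℝ) (j : ℕ) :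
    fv J xh (fun a => c * F a) j = c * fv J xh F j := by
  unfold fv; split_ifs <;> ring

lemma fv_sub (J : ℕ) (xh : ℕ → ℝ) (F G : ℕ → ℝ) (j : ℕ) :
    fv J xh (fun a => F a - G a) j = fv J xh F j - fv J xh G j := by
  unfold fv; split_ifs <;> ring

abbrev W (J I K : ℕ) : Type := (Fin K → Fin (I+1) → ℝ) × (Fin (J - I + 1) → ℝ)

noncomputable def dA {J I K : ℕ} (w : W J I K) (k j : ℕ) : ℝ :=
  if h : 1 ≤ k ∧ k ≤ K ∧ 1 ≤ j ∧ j ≤ I + 1 then w.1 ⟨k - 1, by omega⟩ ⟨j - 1, by omega⟩ else 0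

noncomputable def dB {J I K : ℕ} (w : W J I K) (j : ℕ) : ℝ :=
  if h : I ≤ j ∧ j ≤ J ∧ I ≤ J then w.2 ⟨j - I, by omega⟩ else 0

lemma dA_add {J I K : ℕ} (w w' : W J I K) (k j : ℕ) :
    dA (w + w') k j = dA w k j + dA w' k j := by
  unfold dA; split <;> simp

lemma dA_smul {J I K : ℕ} (c : ℝ) (w : W J I K) (k j : ℕ) :
    dA (c • w) k j = c * dA w k j := by
  unfold dA; split <;> simp

lemma dB_add {J I K : ℕ} (w w' : W J I K) (j : ℕ) :
    dB (w + w') j = dB w j + dB w' j := by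
  unfold dB; split <;> simp

lemma dB_smul {J I K : ℕ} (c : ℝ) (w : W J I K) (j : ℕ) :
    dB (c • w) j = c * dB w j := by
  unfold dB; split <;> simp

noncomputable def finLHS (J I K : ℕ) (δt1 : ℝ) (xh : ℕ → ℝ) (w : W J I K) (k j : ℕ) : ℝ :=
  (hw xh j / δt1) * (dA w k j - (if k = 1 then 0 else dA w (k-1) j))
    - (fu xh (dA w) k j - fu xh (dA w) k (j-1))

noncomputable def coaLHS (J I K : ℕ) (δt2 : ℝ) (xh : ℕ → ℝ) (w : W J I K) (j : ℕ) : ℝ :=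
  (hw xh j / δt2) * dB w j - (fv J xh (dB w) j - fv J xh (dB w) (j-1))

noncomputable def Tmap (J I K : ℕ) (δt1 δt2 : ℝ) (xh : ℕ → ℝ) (w : W J I K) : W J I K :=
  (fun k j => if (j:ℕ) + 1 ≤ I then finLHS J I K δt1 xh w ((k:ℕ)+1) ((j:ℕ)+1)
      else fu xh (dA w) ((k:ℕ)+1) I - fv J xh (dB w) I,
   fun i => if (i:ℕ) = 0 then δt2 * dB w I - ∑ k ∈ Icc 1 K, δt1 * dA w k I
      else coaLHS J I K δt2 xh w (I + (i:ℕ)))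

lemma Tmap_isLinear (J I K : ℕ) (δt1 δt2 : ℝ) (xh : ℕ → ℝ) :
    IsLinearMap ℝ (Tmap J I K δt1 δt2 xh) := by
  constructor
  · intro w w'
    have hA : dA (w + w') = fun k j => dA w k j + dA w' k j := by
      funext k j; exact dA_add w w' k j
    have hB : dB (w + w') = fun j => dB w j + dB w' j := by
      funext j; exact dB_add w w' j
    refine Prod.ext ?_ ?_
    · funext k j
      simp only [Tmap, finLHS, hA, hB, fu_add, fv_add, Prod.fst_add, Pi.add_apply]
      split_ifs <;> ring
    · funext i
      simp only [Tmap, coaLHS, hA, hB, fu_add, fv_add, Prod.snd_add, Pi.add_apply]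
      split_ifs
      · have : ∑ x ∈ Icc 1 K, δt1 * (dA w x I + dA w' x I)
            = (∑ x ∈ Icc 1 K, δt1 * dA w x I) + ∑ x ∈ Icc 1 K, δt1 * dA w' x I := by
          rw [← Finset.sum_add_distrib]
          apply Finset.sum_congr rfl; intro k _; ring
        rw [this]; ring
      · ring
  · intro c w
    have hA : dA (c • w) = fun k j => c * dA w k j := by
      funext k j; exact dA_smul c w k j
    have hB : dB (c • w) = fun j => c * dB w j := by
      funext j; exact dB_smul c w j
    refine Prod.ext ?_ ?_
    · funext k j
      simp only [Tmap, finLHS, hA, hB, fu_smul, fv_smul, Prod.smul_fst, Pi.smul_apply,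
        smul_eq_mul]
      split_ifs <;> ring
    · funext i
      simp only [Tmap, coaLHS, hA, hB, fu_smul, fv_smul, Prod.smul_snd, Pi.smul_apply,
        smul_eq_mul]
      split_ifs
      · have : ∑ x ∈ Icc 1 K, δt1 * (c * dA w x I)
            = c * ∑ x ∈ Icc 1 K, δt1 * dA w x I := by
          rw [Finset.mul_sum]
          apply Finset.sum_congr rfl; intro k _; ring
        rw [this]; ring
      · ring


section Solve

variable {J I K : ℕ} {δt1 δt2 : ℝ} {xh : ℕ → ℝ}

lemma Tmap_fine (w : W J I K) {k j : ℕ}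
    (hk1 : 1 ≤ k) (hkK : k ≤ K) (hj1 : 1 ≤ j) (hjI : j ≤ I) :
    (Tmap J I K δt1 δt2 xh w).1 ⟨k - 1, by omega⟩ ⟨j - 1, by omega⟩
      = finLHS J I K δt1 xh w k j := by
  simp only [Tmap]
  rw [if_pos (show j - 1 + 1 ≤ I by omega)]
  congr 1 <;> omega

lemma Tmap_iface (w : W J I K) {k : ℕ} (hk1 : 1 ≤ k) (hkK : k ≤ K) :
    (Tmap J I K δt1 δt2 xh w).1 ⟨k - 1, by omega⟩ ⟨I, by omega⟩
      = fu xh (dA w) k I - fv J xh (dB w) I := by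
  simp only [Tmap]
  rw [if_neg (show ¬ (I + 1 ≤ I) by omega)]
  have e : k - 1 + 1 = k := by omega
  rw [e]

lemma Tmap_sum (w : W J I K) :
    (Tmap J I K δt1 δt2 xh w).2 ⟨0, by omega⟩
      = δt2 * dB w I - ∑ k ∈ Icc 1 K, δt1 * dA w k I := by
  simp only [Tmap]
  rw [if_pos]
  trivial

lemma Tmap_coarse (w : W J I K) {j : ℕ} (hj1 : I + 1 ≤ j) (hjJ : j ≤ J) :
    (Tmap J I K δt1 δt2 xh w).2 ⟨j - I, by omega⟩ = coaLHS J I K δt2 xh w j := by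
  simp only [Tmap]
  rw [if_neg (show ¬ (j - I = 0) by omega)]
  have e : I + (j - I) = j := by omega
  rw [e]

lemma Tmap_zero_of (hI1 : 1 ≤ I) (hIJ : I < J) (hK : 1 ≤ K)
    (hδt1 : 0 < δt1) (hδt2 : 0 < δt2) (hxmono : ∀ j < J, xh j < xh (j+1))
    (w : W J I K) (h : Tmap J I K δt1 δt2 xh w = 0) : w = 0 := by
  have hIJ' : I ≤ J := le_of_lt hIJ
  have hstep : Step J I K δt1 δt2 xh (fun _ => 0) (fun _ => 0) (fun _ _ => 0) (fun _ => 0)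
      (dA w) (dB w) := by
    refine ⟨?_, ?_, ?_, ?_⟩
    · intro k hk j hj
      simp only [mem_Icc] at hk hj
      have hc := congrFun (congrFun (congrArg Prod.fst h) ⟨k-1, by omega⟩) ⟨j-1, by omega⟩
      rw [Tmap_fine w hk.1 hk.2 hj.1 hj.2] at hc
      simp only [Prod.fst_zero, Pi.zero_apply] at hc
      rw [finLHS] at hc
      simpa using hc
    · intro j hj
      simp only [mem_Icc] at hj
      have hc := congrFun (congrArg Prod.snd h) ⟨j - I, by omega⟩
      rw [Tmap_coarse w hj.1 hj.2] at hc
      simp only [Prod.snd_zero, Pi.zero_apply] at hc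
      rw [coaLHS] at hc
      simpa using hc
    · intro k hk
      simp only [mem_Icc] at hk
      have hc := congrFun (congrFun (congrArg Prod.fst h) ⟨k-1, by omega⟩) ⟨I, by omega⟩
      rw [Tmap_iface w hk.1 hk.2] at hc
      simp only [Prod.fst_zero, Pi.zero_apply] at hc
      linarith [hc]
    · have hc := congrFun (congrArg Prod.snd h) ⟨0, by omega⟩
      rw [Tmap_sum w] at hc
      simp only [Prod.snd_zero, Pi.zero_apply] at hc
      linarith [hc]
  obtain ⟨hA0, hB0⟩ := hom_zero hI1 hIJ hK hδt1 hδt2 hxmono (dA w) (dB w) hstep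
  refine Prod.ext ?_ ?_
  · funext k j
    have e : dA w ((k:ℕ)+1) ((j:ℕ)+1) = w.1 k j := by
      rw [dA, dif_pos (⟨by omega, by omega, by omega, by omega⟩ :
        1 ≤ (k:ℕ)+1 ∧ (k:ℕ)+1 ≤ K ∧ 1 ≤ (j:ℕ)+1 ∧ (j:ℕ)+1 ≤ I + 1)]
      congr 1 <;> simp [Fin.ext_iff]
    have := hA0 ((k:ℕ)+1) (mem_Icc.mpr ⟨by omega, by omega⟩)
      ((j:ℕ)+1) (mem_Icc.mpr ⟨by omega, by omega⟩)
    rw [e] at this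
    simpa using this
  · funext i
    have hiJ : I + (i:ℕ) ≤ J := by omega
    have e : dB w (I + (i:ℕ)) = w.2 i := by
      rw [dB, dif_pos (⟨by omega, hiJ, hIJ'⟩ : I ≤ I + (i:ℕ) ∧ I + (i:ℕ) ≤ J ∧ I ≤ J)]
      congr 1
      simp [Fin.ext_iff]
    have := hB0 (I + (i:ℕ)) (mem_Icc.mpr ⟨by omega, hiJ⟩)
    rw [e] at this
    simpa using this

lemma exists_W (hI1 : 1 ≤ I) (hIJ : I < J) (hK : 1 ≤ K)
    (hδt1 : 0 < δt1) (hδt2 : 0 < δt2) (hxmono : ∀ j < J, xh j < xh (j+1))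
    (q qc : ℕ → ℝ) (g1 : ℕ → ℕ → ℝ) (g2 : ℕ → ℝ) :
    ∃ w : W J I K, Step J I K δt1 δt2 xh q qc g1 g2 (dA w) (dB w) := by
  have hIJ' : I ≤ J := le_of_lt hIJ
  let TL : W J I K →ₗ[ℝ] W J I K :=
    IsLinearMap.mk' (Tmap J I K δt1 δt2 xh) (Tmap_isLinear J I K δt1 δt2 xh)
  have hinj : Function.Injective TL := by
    intro w w' hww
    have hz : Tmap J I K δt1 δt2 xh (w - w') = 0 := by
      have : TL (w - w') = 0 := by rw [map_sub, hww, sub_self]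
      simpa [TL, IsLinearMap.mk'] using this
    have := Tmap_zero_of hI1 hIJ hK hδt1 hδt2 hxmono (w - w') hz
    exact sub_eq_zero.mp this
  have hsurj : Function.Surjective TL := LinearMap.injective_iff_surjective.mp hinj
  set b : W J I K :=
    (fun k j => if (j:ℕ) + 1 ≤ I then
        hw xh ((j:ℕ)+1) * g1 ((k:ℕ)+1) ((j:ℕ)+1)
          + (if (k:ℕ) = 0 then (hw xh ((j:ℕ)+1) / δt1) * q ((j:ℕ)+1) else 0)
      else 0,
     fun i => if (i:ℕ) = 0 then 0
      else hw xh (I + (i:ℕ)) * g2 (I + (i:ℕ)) + (hw xh (I + (i:ℕ)) / δt2) * qc (I + (i:ℕ)))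
    with hbdef
  obtain ⟨w, hwb⟩ := hsurj b
  have hwb' : Tmap J I K δt1 δt2 xh w = b := hwb
  refine ⟨w, ?_, ?_, ?_, ?_⟩
  · intro k hk j hj
    simp only [mem_Icc] at hk hj
    have hc := congrFun (congrFun (congrArg Prod.fst hwb') ⟨k-1, by omega⟩) ⟨j-1, by omega⟩
    rw [Tmap_fine w hk.1 hk.2 hj.1 hj.2] at hc
    have hb1 : b.1 ⟨k-1, by omega⟩ ⟨j-1, by omega⟩
        = hw xh j * g1 k j + (if k = 1 then (hw xh j / δt1) * q j else 0) := by
      rw [hbdef]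
      simp only
      rw [if_pos (show j - 1 + 1 ≤ I by omega)]
      have e1 : j - 1 + 1 = j := by omega
      have e2 : k - 1 + 1 = k := by omega
      rw [e1, e2]
      congr 1
      by_cases hk1 : k = 1
      · rw [if_pos (by omega), if_pos hk1]
      · rw [if_neg (by omega), if_neg hk1]
    rw [hb1, finLHS] at hc
    by_cases hk1 : k = 1
    · simp only [if_pos hk1] at hc ⊢
      linear_combination hc
    · simp only [if_neg hk1] at hc ⊢
      linear_combination hc
  · intro j hj
    simp only [mem_Icc] at hj
    have hc := congrFun (congrArg Prod.snd hwb') ⟨j - I, by omega⟩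
    rw [Tmap_coarse w hj.1 hj.2] at hc
    have hb2 : b.2 ⟨j - I, by omega⟩ = hw xh j * g2 j + (hw xh j / δt2) * qc j := by
      rw [hbdef]
      simp only
      rw [if_neg (show ¬ (j - I = 0) by omega)]
      have e : I + (j - I) = j := by omega
      rw [e]
    rw [hb2, coaLHS] at hc
    linear_combination hc
  · intro k hk
    simp only [mem_Icc] at hk
    have hc := congrFun (congrFun (congrArg Prod.fst hwb') ⟨k-1, by omega⟩) ⟨I, by omega⟩
    rw [Tmap_iface w hk.1 hk.2] at hc
    have hb1 : b.1 ⟨k-1, by omega⟩ ⟨I, by omega⟩ = 0 := by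
      rw [hbdef]
      simp only
      rw [if_neg (show ¬ (I + 1 ≤ I) by omega)]
    rw [hb1] at hc
    linarith [hc]
  · have hc := congrFun (congrArg Prod.snd hwb') ⟨0, by omega⟩
    rw [Tmap_sum w] at hc
    have hb2 : b.2 ⟨0, by omega⟩ = 0 := by rw [hbdef]; simp
    rw [hb2] at hc
    linarith [hc]

lemma step_unique (hI1 : 1 ≤ I) (hIJ : I < J) (hK : 1 ≤ K)
    (hδt1 : 0 < δt1) (hδt2 : 0 < δt2) (hxmono : ∀ j < J, xh j < xh (j+1))
    (q q' qc qc' : ℕ → ℝ) (g1 : ℕ → ℕ → ℝ) (g2 : ℕ → ℝ)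
    (A A' : ℕ → ℕ → ℝ) (B B' : ℕ → ℝ)
    (hq : ∀ j ∈ Icc 1 I, q j = q' j) (hqc : ∀ j ∈ Icc (I+1) J, qc j = qc' j)
    (h : Step J I K δt1 δt2 xh q qc g1 g2 A B)
    (h' : Step J I K δt1 δt2 xh q' qc' g1 g2 A' B') :
    (∀ k ∈ Icc 1 K, ∀ j ∈ Icc 1 (I+1), A k j = A' k j) ∧ (∀ j ∈ Icc I J, B j = B' j) := by
  obtain ⟨hF, hG, hM, hSm⟩ := h
  obtain ⟨hF', hG', hM', hSm'⟩ := h'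
  have hstep : Step J I K δt1 δt2 xh (fun _ => 0) (fun _ => 0) (fun _ _ => 0) (fun _ => 0)
      (fun k j => A k j - A' k j) (fun j => B j - B' j) := by
    refine ⟨?_, ?_, ?_, ?_⟩
    · intro k hk j hj
      have h1 := hF k hk j hj
      have h2 := hF' k hk j hj
      simp only [fu_sub]
      by_cases hk1 : k = 1
      · rw [if_pos hk1] at h1 h2 ⊢
        have hqj := hq j hj
        linear_combination h1 - h2 + (hw xh j / δt1) * hqj
      · rw [if_neg hk1] at h1 h2 ⊢
        linear_combination h1 - h2
    · intro j hj
      have h1 := hG j hj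
      have h2 := hG' j hj
      simp only [fv_sub]
      have hqj := hqc j hj
      linear_combination h1 - h2 + (hw xh j / δt2) * hqj
    · intro k hk
      simp only [fu_sub, fv_sub]
      rw [hM k hk, hM' k hk]
    · simp only
      have hs : ∑ k ∈ Icc 1 K, δt1 * (A k I - A' k I)
          = (∑ k ∈ Icc 1 K, δt1 * A k I) - ∑ k ∈ Icc 1 K, δt1 * A' k I := by
        rw [← Finset.sum_sub_distrib]
        apply Finset.sum_congr rfl; intro k _; ring
      rw [hs, ← hSm, ← hSm']
      ring
  obtain ⟨hA0, hB0⟩ := hom_zero hI1 hIJ hK hδt1 hδt2 hxmono _ _ hstep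
  constructor
  · intro k hk j hj
    have := hA0 k hk j hj
    have : A k j - A' k j = 0 := this
    linarith
  · intro j hj
    have : B j - B' j = 0 := hB0 j hj
    linarith

end Solve

end CFVAux

namespace CFVAux

lemma uF_fu {I : ℕ} (hI1 : 1 ≤ I) (xh : ℕ → ℝ) (p1 : ℕ → ℕ → ℕ → ℝ) (r1 : ℕ → ℕ → ℝ)
    (A : ℕ → ℕ → ℝ) (n : ℕ)
    (hA : ∀ k j, 1 ≤ j → j ≤ I → A k j = p1 n k j) (hg : ∀ k, A k (I+1) = r1 n k)
    (k : ℕ) {j : ℕ} (hj : j ≤ I) :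
    uF I xh p1 r1 n k j = fu xh A k j := by
  unfold uF fu
  by_cases h0 : j = 0
  · rw [if_pos h0, if_pos h0, hA k 1 le_rfl hI1]
  · rw [if_neg h0, if_neg h0]
    by_cases hI : j < I
    · rw [if_pos hI, hA k (j+1) (by omega) (by omega), hA k j (by omega) hj]
    · have hjI : j = I := by omega
      subst hjI
      rw [if_neg (lt_irrefl j), hg k, hA k j (by omega) le_rfl]

lemma uC_fv {I J : ℕ} (hIJ : I < J) (xh : ℕ → ℝ) (p2 : ℕ → ℕ → ℝ) (r2 : ℕ → ℝ)
    (B : ℕ → ℝ) (n : ℕ)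
    (hB : ∀ j, I + 1 ≤ j → j ≤ J → B j = p2 n j) (hBI : B I = r2 n)
    {j : ℕ} (hjI : I ≤ j) (hjJ : j ≤ J) :
    uC I J xh p2 r2 n j = fv J xh B j := by
  unfold uC fv
  by_cases hJ : j = J
  · rw [if_pos hJ, if_pos hJ, hB J (by omega) le_rfl]
  · rw [if_neg hJ, if_neg hJ]
    by_cases hI : I < j
    · rw [if_pos hI, hB (j+1) (by omega) (by omega), hB j (by omega) (by omega)]
    · have hji : j = I := by omega
      subst hji
      rw [if_neg hI, hB (j+1) le_rfl (by omega), hBI]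

noncomputable def seqW (J I K : ℕ) (δt1 δt2 : ℝ) (xh : ℕ → ℝ) (p0 : ℕ → ℝ)
    (f1 : ℕ → ℕ → ℕ → ℝ) (f2 : ℕ → ℕ → ℝ)
    (hI1 : 1 ≤ I) (hIJ : I < J) (hK : 1 ≤ K) (hδt1 : 0 < δt1) (hδt2 : 0 < δt2)
    (hxmono : ∀ j < J, xh j < xh (j+1)) : ℕ → W J I K
  | 0 => 0
  | (n+1) => Classical.choose (exists_W hI1 hIJ hK hδt1 hδt2 hxmono
      (if n = 0 then p0
        else fun j => dA (seqW J I K δt1 δt2 xh p0 f1 f2 hI1 hIJ hK hδt1 hδt2 hxmono n) K j)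
      (if n = 0 then p0
        else fun j => dB (seqW J I K δt1 δt2 xh p0 f1 f2 hI1 hIJ hK hδt1 hδt2 hxmono n) j)
      (f1 (n+1)) (f2 (n+1)))

lemma seqW_spec (J I K : ℕ) (δt1 δt2 : ℝ) (xh : ℕ → ℝ) (p0 : ℕ → ℝ)
    (f1 : ℕ → ℕ → ℕ → ℝ) (f2 : ℕ → ℕ → ℝ)
    (hI1 : 1 ≤ I) (hIJ : I < J) (hK : 1 ≤ K) (hδt1 : 0 < δt1) (hδt2 : 0 < δt2)
    (hxmono : ∀ j < J, xh j < xh (j+1)) (n : ℕ) (hn : 1 ≤ n) :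
    Step J I K δt1 δt2 xh
      (if n = 1 then p0
        else fun j => dA (seqW J I K δt1 δt2 xh p0 f1 f2 hI1 hIJ hK hδt1 hδt2 hxmono (n-1)) K j)
      (if n = 1 then p0
        else fun j => dB (seqW J I K δt1 δt2 xh p0 f1 f2 hI1 hIJ hK hδt1 hδt2 hxmono (n-1)) j)
      (f1 n) (f2 n)
      (dA (seqW J I K δt1 δt2 xh p0 f1 f2 hI1 hIJ hK hδt1 hδt2 hxmono n))
      (dB (seqW J I K δt1 δt2 xh p0 f1 f2 hI1 hIJ hK hδt1 hδt2 hxmono n)) := by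
  obtain ⟨m, rfl⟩ : ∃ m, n = m + 1 := ⟨n-1, by omega⟩
  have h := Classical.choose_spec (exists_W (J := J) hI1 hIJ hK hδt1 hδt2 hxmono
      (if m = 0 then p0
        else fun j => dA (seqW J I K δt1 δt2 xh p0 f1 f2 hI1 hIJ hK hδt1 hδt2 hxmono m) K j)
      (if m = 0 then p0
        else fun j => dB (seqW J I K δt1 δt2 xh p0 f1 f2 hI1 hIJ hK hδt1 hδt2 hxmono m) j)
      (f1 (m+1)) (f2 (m+1)))
  have e : seqW J I K δt1 δt2 xh p0 f1 f2 hI1 hIJ hK hδt1 hδt2 hxmono (m+1)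
      = Classical.choose (exists_W hI1 hIJ hK hδt1 hδt2 hxmono
      (if m = 0 then p0
        else fun j => dA (seqW J I K δt1 δt2 xh p0 f1 f2 hI1 hIJ hK hδt1 hδt2 hxmono m) K j)
      (if m = 0 then p0
        else fun j => dB (seqW J I K δt1 δt2 xh p0 f1 f2 hI1 hIJ hK hδt1 hδt2 hxmono m) j)
      (f1 (m+1)) (f2 (m+1))) := by
    rw [seqW]
  rw [e]
  have e2 : m + 1 - 1 = m := by omega
  rw [e2]
  simp only [show (m + 1 = 1) ↔ (m = 0) from by omega]
  exact h

end CFVAux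



namespace CFVAux

lemma global_exists (J I K N2 : ℕ) (hI1 : 1 ≤ I) (hIJ : I < J) (hK : 1 ≤ K)
    (δt1 δt2 : ℝ) (hδt1 : 0 < δt1) (hδt2 : 0 < δt2)
    (xh : ℕ → ℝ) (hxmono : ∀ j < J, xh j < xh (j + 1))
    (p0 : ℕ → ℝ) (f1 : ℕ → ℕ → ℕ → ℝ) (f2 : ℕ → ℕ → ℝ) :
    ∃ p1 p2 r1 r2,
        SchemeEqs J I K N2 δt1 δt2 xh p0 f1 f2 p1 p2 r1 r2
        ∧ InterfaceFineFluxOverlap J I K N2 δt1 δt2 xh p1 p2 r1 r2 := by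
  classical
  set S : ℕ → W J I K := seqW J I K δt1 δt2 xh p0 f1 f2 hI1 hIJ hK hδt1 hδt2 hxmono with hS
  set p1 : ℕ → ℕ → ℕ → ℝ := fun n k j => dA (S n) k j with hp1
  set p2 : ℕ → ℕ → ℝ := fun n j => dB (S n) j with hp2
  set r1 : ℕ → ℕ → ℝ := fun n k => dA (S n) k (I+1) with hr1
  set r2 : ℕ → ℝ := fun n => dB (S n) I with hr2
  have bridgeF : ∀ n k j, j ≤ I → uF I xh p1 r1 n k j = fu xh (dA (S n)) k j := by
    intro n k j hj
    exact uF_fu hI1 xh p1 r1 (dA (S n)) n (fun k j _ _ => rfl) (fun k => rfl) k hj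
  have bridgeC : ∀ n j, I ≤ j → j ≤ J → uC I J xh p2 r2 n j = fv J xh (dB (S n)) j := by
    intro n j h1 h2
    exact uC_fv hIJ xh p2 r2 (dB (S n)) n (fun j _ _ => rfl) rfl h1 h2
  refine ⟨p1, p2, r1, r2, ⟨?_, ?_⟩, ?_⟩
  · -- fine scheme equations
    intro n hn k hk j hj
    simp only [mem_Icc] at hn hj
    obtain ⟨hF, hG, hM, hSm⟩ := seqW_spec J I K δt1 δt2 xh p0 f1 f2 hI1 hIJ hK hδt1 hδt2
      hxmono n hn.1
    have h := hF k hk j (mem_Icc.mpr hj)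
    rw [bridgeF n k j hj.2, bridgeF n k (j-1) (by omega)]
    have hprev : prevF K p0 p1 n k j
        = (if k = 1 then
            (if n = 1 then p0
              else fun j => dA (seqW J I K δt1 δt2 xh p0 f1 f2 hI1 hIJ hK hδt1 hδt2 hxmono (n-1)) K j) j
          else dA (seqW J I K δt1 δt2 xh p0 f1 f2 hI1 hIJ hK hδt1 hδt2 hxmono n) (k-1) j) := by
      simp only [prevF]
      by_cases hk1 : k = 1
      · rw [if_pos hk1, if_pos hk1]
        by_cases hn1 : n = 1
        · rw [if_pos hn1, if_pos hn1]
        · rw [if_neg hn1, if_neg hn1]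
      · rw [if_neg hk1, if_neg hk1]
    rw [hprev]
    exact h
  · -- coarse scheme equations
    intro n hn j hj
    simp only [mem_Icc] at hn hj
    obtain ⟨hF, hG, hM, hSm⟩ := seqW_spec J I K δt1 δt2 xh p0 f1 f2 hI1 hIJ hK hδt1 hδt2
      hxmono n hn.1
    have h := hG j (mem_Icc.mpr hj)
    rw [bridgeC n j (by omega) hj.2, bridgeC n (j-1) (by omega) (by omega)]
    have hprev : prevC p0 p2 n j
        = (if n = 1 then p0
            else fun j => dB (seqW J I K δt1 δt2 xh p0 f1 f2 hI1 hIJ hK hδt1 hδt2 hxmono (n-1)) j) j := by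
      simp only [prevC]
      by_cases hn1 : n = 1
      · rw [if_pos hn1, if_pos hn1]
      · rw [if_neg hn1, if_neg hn1]
    rw [hprev]
    exact h
  · -- interface conditions
    intro n hn
    simp only [mem_Icc] at hn
    obtain ⟨hF, hG, hM, hSm⟩ := seqW_spec J I K δt1 δt2 xh p0 f1 f2 hI1 hIJ hK hδt1 hδt2
      hxmono n hn.1
    constructor
    · intro k hk
      rw [bridgeF n k I le_rfl, bridgeC n I le_rfl (le_of_lt hIJ)]
      exact hM k hk
    · exact hSm

end CFVAux


namespace CFVAux

lemma conv_step (J I K N2 : ℕ) (hI1 : 1 ≤ I) (hIJ : I < J)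
    (δt1 δt2 : ℝ) (xh : ℕ → ℝ)
    (p0 : ℕ → ℝ) (f1 : ℕ → ℕ → ℕ → ℝ) (f2 : ℕ → ℕ → ℝ)
    (P1 : ℕ → ℕ → ℕ → ℝ) (P2 : ℕ → ℕ → ℝ) (R1 : ℕ → ℕ → ℝ) (R2 : ℕ → ℝ)
    (hSch : SchemeEqs J I K N2 δt1 δt2 xh p0 f1 f2 P1 P2 R1 R2)
    (hInt : InterfaceFineFluxOverlap J I K N2 δt1 δt2 xh P1 P2 R1 R2) :
    ∀ n ∈ Icc 1 N2, Step J I K δt1 δt2 xh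
      (prevF K p0 P1 n 1) (prevC p0 P2 n) (f1 n) (f2 n)
      (fun k j => if j = I + 1 then R1 n k else P1 n k j)
      (fun j => if j = I then R2 n else P2 n j) := by
  intro n hn
  set A : ℕ → ℕ → ℝ := fun k j => if j = I + 1 then R1 n k else P1 n k j with hA
  set B : ℕ → ℝ := fun j => if j = I then R2 n else P2 n j with hB
  have hAval : ∀ k j, 1 ≤ j → j ≤ I → A k j = P1 n k j := by
    intro k j _ hj
    rw [hA]
    exact if_neg (by omega)
  have hAg : ∀ k, A k (I+1) = R1 n k := by
    intro k
    rw [hA]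
    simp
  have hBval : ∀ j, I+1 ≤ j → j ≤ J → B j = P2 n j := by
    intro j hj _
    rw [hB]
    exact if_neg (by omega)
  have hBI : B I = R2 n := by rw [hB]; simp
  have bF : ∀ k j, j ≤ I → uF I xh P1 R1 n k j = fu xh A k j :=
    fun k j hj => uF_fu hI1 xh P1 R1 A n hAval hAg k hj
  have bC : ∀ j, I ≤ j → j ≤ J → uC I J xh P2 R2 n j = fv J xh B j :=
    fun j h1 h2 => uC_fv hIJ xh P2 R2 B n hBval hBI h1 h2
  refine ⟨?_, ?_, ?_, ?_⟩
  · intro k hk j hj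
    simp only [mem_Icc] at hj hk
    have h := hSch.1 n hn k (mem_Icc.mpr hk) j (mem_Icc.mpr hj)
    have hprev : (if k = 1 then prevF K p0 P1 n 1 j else A (k-1) j)
        = prevF K p0 P1 n k j := by
      by_cases hk1 : k = 1
      · rw [if_pos hk1, hk1]
      · rw [if_neg hk1, hAval (k-1) j hj.1 hj.2]
        simp only [prevF]
        rw [if_neg hk1]
    rw [hAval k j hj.1 hj.2, hprev, ← bF k j hj.2, ← bF k (j-1) (by omega)]
    exact h
  · intro j hj
    simp only [mem_Icc] at hj
    have h := hSch.2 n hn j (mem_Icc.mpr hj)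
    rw [hBval j hj.1 hj.2, ← bC j (by omega) hj.2, ← bC (j-1) (by omega) (by omega)]
    exact h
  · intro k hk
    have h := (hInt n hn).1 k hk
    rw [← bF k I le_rfl, ← bC I le_rfl (le_of_lt hIJ)]
    exact h
  · have h := (hInt n hn).2
    rw [hBI, h]
    apply Finset.sum_congr rfl
    intro k _
    rw [hAval k I hI1 le_rfl]

lemma unpack (I J K : ℕ) (hI1 : 1 ≤ I) (hIJ : I < J) (hK : 1 ≤ K)
    (p1 p1' : ℕ → ℕ → ℕ → ℝ) (p2 p2' : ℕ → ℕ → ℝ) (r1 r1' : ℕ → ℕ → ℝ)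
    (r2 r2' : ℕ → ℝ) (n : ℕ)
    (HA : ∀ k ∈ Icc 1 K, ∀ j ∈ Icc 1 (I+1),
      (if j = I + 1 then r1 n k else p1 n k j) = (if j = I + 1 then r1' n k else p1' n k j))
    (HB : ∀ j ∈ Icc I J,
      (if j = I then r2 n else p2 n j) = (if j = I then r2' n else p2' n j)) :
    (∀ k ∈ Icc 1 K, (∀ j ∈ Icc 1 I, p1 n k j = p1' n k j) ∧ r1 n k = r1' n k)
      ∧ (∀ j ∈ Icc (I+1) J, p2 n j = p2' n j) ∧ r2 n = r2' n := by
  refine ⟨?_, ?_, ?_⟩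
  · intro k hk
    constructor
    · intro j hj
      simp only [mem_Icc] at hj
      have h := HA k hk j (mem_Icc.mpr ⟨hj.1, by omega⟩)
      rw [if_neg (by omega), if_neg (by omega)] at h
      exact h
    · have h := HA k hk (I+1) (mem_Icc.mpr ⟨by omega, le_rfl⟩)
      rw [if_pos rfl, if_pos rfl] at h
      exact h
  · intro j hj
    simp only [mem_Icc] at hj
    have h := HB j (mem_Icc.mpr ⟨by omega, hj.2⟩)
    rw [if_neg (by omega), if_neg (by omega)] at h
    exact h
  · have h := HB I (mem_Icc.mpr ⟨le_rfl, le_of_lt hIJ⟩)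
    rw [if_pos rfl, if_pos rfl] at h
    exact h

lemma global_unique (J I K N2 : ℕ) (hI1 : 1 ≤ I) (hIJ : I < J) (hK : 1 ≤ K)
    (δt1 δt2 : ℝ) (hδt1 : 0 < δt1) (hδt2 : 0 < δt2)
    (xh : ℕ → ℝ) (hxmono : ∀ j < J, xh j < xh (j + 1))
    (p0 : ℕ → ℝ) (f1 : ℕ → ℕ → ℕ → ℝ) (f2 : ℕ → ℕ → ℝ)
    (p1 p1' : ℕ → ℕ → ℕ → ℝ) (p2 p2' : ℕ → ℕ → ℝ) (r1 r1' : ℕ → ℕ → ℝ) (r2 r2' : ℕ → ℝ)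
    (hS : SchemeEqs J I K N2 δt1 δt2 xh p0 f1 f2 p1 p2 r1 r2)
    (hIn : InterfaceFineFluxOverlap J I K N2 δt1 δt2 xh p1 p2 r1 r2)
    (hS' : SchemeEqs J I K N2 δt1 δt2 xh p0 f1 f2 p1' p2' r1' r2')
    (hIn' : InterfaceFineFluxOverlap J I K N2 δt1 δt2 xh p1' p2' r1' r2') :
    ∀ n ∈ Icc 1 N2,
      (∀ k ∈ Icc 1 K, (∀ j ∈ Icc 1 I, p1 n k j = p1' n k j) ∧ r1 n k = r1' n k)
      ∧ (∀ j ∈ Icc (I + 1) J, p2 n j = p2' n j) ∧ r2 n = r2' n := by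
  have c1 := conv_step J I K N2 hI1 hIJ δt1 δt2 xh p0 f1 f2 p1 p2 r1 r2 hS hIn
  have c2 := conv_step J I K N2 hI1 hIJ δt1 δt2 xh p0 f1 f2 p1' p2' r1' r2' hS' hIn'
  have main : ∀ n, 1 ≤ n → n ≤ N2 →
      ((∀ k ∈ Icc 1 K, (∀ j ∈ Icc 1 I, p1 n k j = p1' n k j) ∧ r1 n k = r1' n k)
      ∧ (∀ j ∈ Icc (I + 1) J, p2 n j = p2' n j) ∧ r2 n = r2' n) := by
    intro n hn
    induction n, hn using Nat.le_induction with
    | base =>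
      intro hN
      have s1 := c1 1 (mem_Icc.mpr ⟨le_rfl, hN⟩)
      have s2 := c2 1 (mem_Icc.mpr ⟨le_rfl, hN⟩)
      have hq : ∀ j ∈ Icc 1 I, prevF K p0 p1 1 1 j = prevF K p0 p1' 1 1 j := by
        intro j _
        simp [prevF]
      have hqc : ∀ j ∈ Icc (I+1) J, prevC p0 p2 1 j = prevC p0 p2' 1 j := by
        intro j _
        simp [prevC]
      obtain ⟨HA, HB⟩ := step_unique hI1 hIJ hK hδt1 hδt2 hxmono _ _ _ _ _ _ _ _ _ _
        hq hqc s1 s2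
      exact unpack I J K hI1 hIJ hK p1 p1' p2 p2' r1 r1' r2 r2' 1 HA HB
    | succ n hn ih =>
      intro hN
      have ihres := ih (by omega)
      have s1 := c1 (n+1) (mem_Icc.mpr ⟨by omega, hN⟩)
      have s2 := c2 (n+1) (mem_Icc.mpr ⟨by omega, hN⟩)
      have hq : ∀ j ∈ Icc 1 I, prevF K p0 p1 (n+1) 1 j = prevF K p0 p1' (n+1) 1 j := by
        intro j hj
        simp only [prevF, if_pos rfl, if_neg (show ¬ n+1 = 1 by omega)]
        have e : n + 1 - 1 = n := by omega
        rw [e]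
        exact (ihres.1 K (mem_Icc.mpr ⟨hK, le_rfl⟩)).1 j hj
      have hqc : ∀ j ∈ Icc (I+1) J, prevC p0 p2 (n+1) j = prevC p0 p2' (n+1) j := by
        intro j hj
        simp only [prevC, if_neg (show ¬ n+1 = 1 by omega)]
        have e : n + 1 - 1 = n := by omega
        rw [e]
        exact ihres.2.1 j hj
      obtain ⟨HA, HB⟩ := step_unique hI1 hIJ hK hδt1 hδt2 hxmono _ _ _ _ _ _ _ _ _ _
        hq hqc s1 s2
      exact unpack I J K hI1 hIJ hK p1 p1' p2 p2' r1 r1' r2 r2' (n+1) HA HB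
  intro n hn
  simp only [mem_Icc] at hn
  exact main n hn.1 hn.2

end CFVAux

/-- Well-posedness of the overlapping scheme with fine-flux/coarse-pressure matching:
for every choice of sources and initial values, the resulting finite linear system has
exactly one solution `(p_j^{n,k}` for `j ≤ I`, `p_j^{n}` for `j > I`, `p_{I+1}^{n,k}`,
`p_I^{n})`. -/
theorem wellposed_overlap_fine_flux
    (J I K N2 : ℕ) (hJ : 3 ≤ J) (hI1 : 1 ≤ I) (hIJ : I < J) (hK : 1 ≤ K) (hN2 : 1 ≤ N2)
    (δt1 : ℝ) (hδt1 : 0 < δt1) (δt2 : ℝ) (hδt2 : δt2 = (K : ℝ) * δt1)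
    (xh : ℕ → ℝ) (hx0 : xh 0 = 0) (hxmono : ∀ j < J, xh j < xh (j + 1))
    (p0 : ℕ → ℝ) (f1 : ℕ → ℕ → ℕ → ℝ) (f2 : ℕ → ℕ → ℝ) :
    (∃ p1 p2 r1 r2,
        SchemeEqs J I K N2 δt1 δt2 xh p0 f1 f2 p1 p2 r1 r2
        ∧ InterfaceFineFluxOverlap J I K N2 δt1 δt2 xh p1 p2 r1 r2)
    ∧ ∀ p1 p2 r1 r2 p1' p2' r1' r2',
        SchemeEqs J I K N2 δt1 δt2 xh p0 f1 f2 p1 p2 r1 r2 →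
        InterfaceFineFluxOverlap J I K N2 δt1 δt2 xh p1 p2 r1 r2 →
        SchemeEqs J I K N2 δt1 δt2 xh p0 f1 f2 p1' p2' r1' r2' →
        InterfaceFineFluxOverlap J I K N2 δt1 δt2 xh p1' p2' r1' r2' →
        ∀ n ∈ Icc 1 N2,
          (∀ k ∈ Icc 1 K, (∀ j ∈ Icc 1 I, p1 n k j = p1' n k j) ∧ r1 n k = r1' n k)
          ∧ (∀ j ∈ Icc (I + 1) J, p2 n j = p2' n j) ∧ r2 n = r2' n := by
  have hKpos : (0:ℝ) < (K:ℝ) := by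
    have : 0 < K := by omega
    exact_mod_cast this
  have hδt2' : 0 < δt2 := by
    rw [hδt2]
    exact mul_pos hKpos hδt1
  constructor
  · exact CFVAux.global_exists J I K N2 hI1 hIJ hK δt1 δt2 hδt1 hδt2' xh hxmono p0 f1 f2
  · intro p1 p2 r1 r2 p1' p2' r1' r2' a1 a2 a3 a4
    exact CFVAux.global_unique J I K N2 hI1 hIJ hK δt1 δt2 hδt1 hδt2' xh hxmono p0 f1 f2
      p1 p1' p2 p2' r1 r1' r2 r2' a1 a2 a3 a4
end

section
/- Unconditional L² stability of the overlapping scheme with coarse-flux/fine-pressure matching: augment the one-dimensional composite finite volume scheme with additional unknowns p_{I+1}^{n,k} (k = 1,…,𝒦) and p_I^{n} (n = 1,…,N₂), interface fluxes u_{I+1/2}^{n,k} = (p_{I+1}^{n,k} − p_I^{n,k})/(x_{I+1} − x_I) and u_{I+1/2}^{n} = (p_{I+1}^{n} − p_I^{n})/(x_{I+1} − x_I), and interface conditions, for every n: δt₂ u_{I+1/2}^{n} = Σ_{k=1}^{𝒦} δt₁ u_{I+1/2}^{n,k} and p_{I+1}^{n,k} = p_{I+1}^{n} for all k. If all sources vanish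 (f_j^{n,k} = 0 and f_j^{n} = 0), then every solution satisfies Σ_{j ≤ I} h_j (p_j^{N₂,𝒦})² + Σ_{j > I} h_j (p_j^{N₂})² ≤ Σ_{j=1}^{J} h_j (p_j^{0})², with no restriction on the sizes of δt₁, δt₂ or the cell widths. -/
open Finset

lemma tele_sum (φ : ℕ → ℝ) (m M : ℕ) (h : m ≤ M) :
    ∑ j ∈ Icc (m+1) M, (φ j - φ (j-1)) = φ M - φ m := by
  rw [← Finset.Ico_add_one_right_eq_Icc, Finset.sum_Ico_eq_sum_range]
  have h1 : M + 1 - (m+1) = M - m := by omega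
  rw [h1]
  have h2 : ∀ i ∈ Finset.range (M - m), φ (m + 1 + i) - φ (m + 1 + i - 1)
      = (fun t => φ (m + t)) (i+1) - (fun t => φ (m + t)) i := by
    intro i _
    simp only
    congr 2 <;> omega
  rw [Finset.sum_congr rfl h2, Finset.sum_range_sub (fun t => φ (m + t))]
  have e : m + (M - m) = M := by omega
  simp [e]

lemma layer (m M : ℕ) (hmM : m ≤ M) (δ : ℝ) (hδ : 0 < δ)
    (h a b g A : ℕ → ℝ) (C : ℝ)
    (hh : ∀ j ∈ Icc (m+1) M, 0 < h j)
    (hA : ∀ j ∈ Icc (m+1) M, A j = a j)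
    (heq : ∀ j ∈ Icc (m+1) M, (h j / δ) * (a j - b j) - (g j - g (j-1)) = 0)
    (hnn : ∀ j ∈ Icc (m+1) M, 0 ≤ g (j-1) * (A j - A (j-1)))
    (hend : g M * A M - g m * A m ≤ C) :
    ∑ j ∈ Icc (m+1) M, h j * (a j) ^ 2 ≤ ∑ j ∈ Icc (m+1) M, h j * (b j) ^ 2 + 2 * δ * C := by
  have hδ' : δ ≠ 0 := ne_of_gt hδ
  have key : ∀ j ∈ Icc (m+1) M,
      h j * (a j) ^ 2 - h j * (b j) ^ 2 ≤ 2 * δ * ((g j - g (j-1)) * A j) := by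
    intro j hj
    have h1 := heq j hj
    have h2 := hh j hj
    have h3 : g j - g (j-1) = (h j / δ) * (a j - b j) := by linarith
    have h4 : 2 * δ * ((g j - g (j-1)) * A j) = 2 * (h j * (a j - b j)) * a j := by
      rw [hA j hj, h3]
      field_simp
    rw [h4]
    nlinarith [mul_nonneg h2.le (sq_nonneg (a j - b j))]
  have tsum := Finset.sum_le_sum key
  rw [Finset.sum_sub_distrib] at tsum
  have habel : ∑ j ∈ Icc (m+1) M, ((g j - g (j-1)) * A j)
      = (g M * A M - g m * A m) - ∑ j ∈ Icc (m+1) M, g (j-1) * (A j - A (j-1)) := by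
    have e1 : ∀ j ∈ Icc (m+1) M, (g j - g (j-1)) * A j
        = ((fun t => g t * A t) j - (fun t => g t * A t) (j-1)) - g (j-1) * (A j - A (j-1)) := by
      intro j _
      simp only
      ring
    rw [Finset.sum_congr rfl e1, Finset.sum_sub_distrib, tele_sum (fun t => g t * A t) m M hmM]
  have hS : 0 ≤ ∑ j ∈ Icc (m+1) M, g (j-1) * (A j - A (j-1)) := Finset.sum_nonneg hnn
  have hT : ∑ j ∈ Icc (m+1) M, ((g j - g (j-1)) * A j) ≤ C := by rw [habel]; linarith
  have h5 : ∑ j ∈ Icc (m+1) M, 2 * δ * ((g j - g (j-1)) * A j)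
      = 2 * δ * ∑ j ∈ Icc (m+1) M, ((g j - g (j-1)) * A j) := by rw [Finset.mul_sum]
  have h6 : 2 * δ * ∑ j ∈ Icc (m+1) M, ((g j - g (j-1)) * A j) ≤ 2 * δ * C :=
    mul_le_mul_of_nonneg_left hT (by positivity)
  linarith

/-- Unconditional `L²` stability of the overlapping scheme with
coarse-flux/fine-pressure matching: if all sources vanish, every solution satisfies
`∑_{j ≤ I} h_j (p_j^{N₂,𝒦})² + ∑_{j > I} h_j (p_j^{N₂})² ≤ ∑_{j=1}^{J} h_j (p_j^0)²`,
with no restriction on the sizes of `δt₁`, `δt₂` or the cell widths. -/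
theorem stability_overlap_coarse_flux
    (J I K N2 : ℕ) (hJ : 3 ≤ J) (hI1 : 1 ≤ I) (hIJ : I < J) (hK : 1 ≤ K) (hN2 : 1 ≤ N2)
    (δt1 : ℝ) (hδt1 : 0 < δt1) (δt2 : ℝ) (hδt2 : δt2 = (K : ℝ) * δt1)
    (xh : ℕ → ℝ) (hx0 : xh 0 = 0) (hxmono : ∀ j < J, xh j < xh (j + 1))
    (p0 : ℕ → ℝ)
    (p1 : ℕ → ℕ → ℕ → ℝ) (p2 : ℕ → ℕ → ℝ) (r1 : ℕ → ℕ → ℝ) (r2 : ℕ → ℝ)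
    (hscheme : SchemeEqs J I K N2 δt1 δt2 xh p0 (fun _ _ _ => 0) (fun _ _ => 0) p1 p2 r1 r2)
    (hinterface : InterfaceCoarseFluxOverlap J I K N2 δt1 δt2 xh p1 p2 r1 r2) :
    ∑ j ∈ Icc 1 I, hw xh j * (p1 N2 K j) ^ 2
      + ∑ j ∈ Icc (I + 1) J, hw xh j * (p2 N2 j) ^ 2
      ≤ ∑ j ∈ Icc 1 J, hw xh j * (p0 j) ^ 2 := by
  obtain ⟨hfine, hcoarse⟩ := hscheme
  have hδ2 : 0 < δt2 := by
    rw [hδt2]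
    have : (0:ℝ) < (K:ℝ) := by exact_mod_cast hK
    positivity
  -- monotonicity of xh on [0, J]
  have hmono' : ∀ b ≤ J, ∀ a < b, xh a < xh b := by
    intro b
    induction b with
    | zero => intro _ a ha; omega
    | succ b ih =>
      intro hb a ha
      rcases Nat.lt_or_ge a b with h | h
      · exact (ih (by omega) a h).trans (hxmono b (by omega))
      · have hab : a = b := by omega
        subst hab
        exact hxmono a (by omega)
  have hhw : ∀ j, 1 ≤ j → j ≤ J → 0 < hw xh j := by
    intro j h1 h2
    have := hmono' j h2 (j-1) (by omega)
    unfold hw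
    linarith
  have hΔ : ∀ j, 1 ≤ j → j + 1 ≤ J → 0 < xc xh (j+1) - xc xh j := by
    intro j h1 h2
    have hlt : xh (j-1) < xh (j+1) := hmono' (j+1) h2 (j-1) (by omega)
    unfold xc
    have e : j + 1 - 1 = j := by omega
    rw [e]
    linarith
  have h0d : 0 < xc xh 1 - xh 0 := by
    have := hxmono 0 (by omega)
    unfold xc
    norm_num
    linarith
  have hJd : 0 < xh J - xc xh J := by
    have := hmono' J le_rfl (J-1) (by omega)
    unfold xc
    linarith
  -- fine step energy inequality
  have fineStep : ∀ n ∈ Icc 1 N2, ∀ k ∈ Icc 1 K,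
      ∑ j ∈ Icc 1 I, hw xh j * (p1 n k j) ^ 2
        ≤ ∑ j ∈ Icc 1 I, hw xh j * (prevF K p0 p1 n k j) ^ 2
          + 2 * δt1 * (uF I xh p1 r1 n k I * r1 n k) := by
    intro n hn k hk
    have := layer 0 I (by omega) δt1 hδt1 (hw xh) (p1 n k) (prevF K p0 p1 n k)
      (uF I xh p1 r1 n k) (fun j => if j = 0 then 0 else p1 n k j)
      (uF I xh p1 r1 n k I * r1 n k)
      (by
        intro j hj
        simp only [zero_add, mem_Icc] at hj
        exact hhw j hj.1 (le_trans hj.2 hIJ.le))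
      (by
        intro j hj
        simp only [zero_add, mem_Icc] at hj
        simp only [if_neg (by omega : ¬ j = 0)])
      (by
        intro j hj
        simp only [zero_add] at hj
        have hs := hfine n hn k hk j hj
        simp only [mul_zero] at hs
        exact hs)
      (by
        intro j hj
        simp only [zero_add, mem_Icc] at hj
        obtain ⟨i, rfl⟩ : ∃ i, j = i + 1 := ⟨j - 1, by omega⟩
        simp only [Nat.add_sub_cancel]
        rcases Nat.eq_zero_or_pos i with hi | hi
        · subst hi
          have hg0 : uF I xh p1 r1 n k 0 = p1 n k 1 / (xc xh 1 - xh 0) := by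
            unfold uF
            rw [if_pos rfl]
          have key : (0:ℝ) ≤ p1 n k 1 / (xc xh 1 - xh 0) * (p1 n k 1 - 0) := by
            rw [sub_zero, div_mul_eq_mul_div]
            exact div_nonneg (mul_self_nonneg _) h0d.le
          simp only [Nat.zero_add, if_neg (Nat.one_ne_zero), if_pos rfl, hg0]
          simpa using key
        · have hgi : uF I xh p1 r1 n k i
              = (p1 n k (i+1) - p1 n k i) / (xc xh (i+1) - xc xh i) := by
            unfold uF
            rw [if_neg (by omega : ¬ i = 0), if_pos (by omega : i < I)]
          simp only [if_neg (Nat.succ_ne_zero i), if_neg (by omega : ¬ i = 0), hgi,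
            div_mul_eq_mul_div]
          exact div_nonneg (mul_self_nonneg _) (hΔ i hi (by omega)).le)
      (by
        have hgI : uF I xh p1 r1 n k I
            = (r1 n k - p1 n k I) / (xc xh (I+1) - xc xh I) := by
          unfold uF
          rw [if_neg (by omega : ¬ I = 0), if_neg (lt_irrefl I)]
        have hΔI := hΔ I hI1 (by omega)
        have e : uF I xh p1 r1 n k I * r1 n k - uF I xh p1 r1 n k I * p1 n k I
            = (r1 n k - p1 n k I) * (r1 n k - p1 n k I) / (xc xh (I+1) - xc xh I) := by
          rw [hgI]
          ring
        have hpos := div_nonneg (mul_self_nonneg (r1 n k - p1 n k I)) hΔI.le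
        simp only [if_pos rfl, if_neg (by omega : ¬ I = 0), mul_zero, sub_zero, if_true]
        linarith)
    simpa using this
  -- coarse step energy inequality
  have coarseStep : ∀ n ∈ Icc 1 N2,
      ∑ j ∈ Icc (I+1) J, hw xh j * (p2 n j) ^ 2
        ≤ ∑ j ∈ Icc (I+1) J, hw xh j * (prevC p0 p2 n j) ^ 2
          + 2 * δt2 * (-(uC I J xh p2 r2 n I * p2 n (I+1))) := by
    intro n hn
    exact layer I J hIJ.le δt2 hδ2 (hw xh) (p2 n) (prevC p0 p2 n)
      (uC I J xh p2 r2 n) (fun j => if j ≤ I then p2 n (I+1) else p2 n j)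
      (-(uC I J xh p2 r2 n I * p2 n (I+1)))
      (by
        intro j hj
        simp only [mem_Icc] at hj
        exact hhw j (by omega) hj.2)
      (by
        intro j hj
        simp only [mem_Icc] at hj
        simp only [if_neg (by omega : ¬ j ≤ I)])
      (by
        intro j hj
        have hs := hcoarse n hn j hj
        simp only [mul_zero] at hs
        exact hs)
      (by
        intro j hj
        simp only [mem_Icc] at hj
        obtain ⟨i, rfl⟩ : ∃ i, j = i + 1 := ⟨j - 1, by omega⟩
        simp only [Nat.add_sub_cancel]
        rcases Nat.eq_or_lt_of_le (by omega : I ≤ i) with hi | hi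
        · subst hi
          simp only [if_neg (by omega : ¬ I + 1 ≤ I), if_pos (le_refl I), if_true, sub_self,
            mul_zero, le_refl]
        · have hgi : uC I J xh p2 r2 n i
              = (p2 n (i+1) - p2 n i) / (xc xh (i+1) - xc xh i) := by
            unfold uC
            rw [if_neg (by omega : ¬ i = J), if_pos hi]
          simp only [if_neg (by omega : ¬ i + 1 ≤ I), if_neg (by omega : ¬ i ≤ I), hgi,
            div_mul_eq_mul_div]
          exact div_nonneg (mul_self_nonneg _) (hΔ i (by omega) (by omega)).le)
      (by
        have hgJ : uC I J xh p2 r2 n J = -(p2 n J) / (xh J - xc xh J) := by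
          unfold uC
          rw [if_pos rfl]
        have e : uC I J xh p2 r2 n J * p2 n J
            = -(p2 n J * p2 n J / (xh J - xc xh J)) := by
          rw [hgJ]
          ring
        have hpos := div_nonneg (mul_self_nonneg (p2 n J)) hJd.le
        simp only [if_neg (by omega : ¬ J ≤ I), if_pos (le_refl I), if_true]
        linarith)
  -- one full coarse step
  have stepN : ∀ n ∈ Icc 1 N2,
      ∑ j ∈ Icc 1 I, hw xh j * (p1 n K j) ^ 2 + ∑ j ∈ Icc (I+1) J, hw xh j * (p2 n j) ^ 2
        ≤ ∑ j ∈ Icc 1 I, hw xh j * (prevF K p0 p1 n 1 j) ^ 2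
          + ∑ j ∈ Icc (I+1) J, hw xh j * (prevC p0 p2 n j) ^ 2 := by
    intro n hn
    obtain ⟨hflux, hpr⟩ := hinterface n hn
    -- telescoping over fine steps
    have fin : ∀ k, 1 ≤ k → k ≤ K →
        ∑ j ∈ Icc 1 I, hw xh j * (p1 n k j) ^ 2
          ≤ ∑ j ∈ Icc 1 I, hw xh j * (prevF K p0 p1 n 1 j) ^ 2
            + ∑ k' ∈ Icc 1 k, 2 * δt1 * (uF I xh p1 r1 n k' I * p2 n (I+1)) := by
      intro k
      induction k with
      | zero => omega
      | succ k ih =>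
        intro h1 hK'
        rcases Nat.eq_zero_or_pos k with hk0 | hk0
        · subst hk0
          have hfs := fineStep n hn 1 (mem_Icc.mpr ⟨le_rfl, hK'⟩)
          rw [hpr 1 (mem_Icc.mpr ⟨le_rfl, hK'⟩)] at hfs
          simpa [Finset.Icc_self] using hfs
        · have ihk := ih hk0 (by omega)
          have hkm : k + 1 ∈ Icc 1 K := mem_Icc.mpr ⟨by omega, hK'⟩
          have hfs := fineStep n hn (k+1) hkm
          rw [hpr (k+1) hkm] at hfs
          have hprev : ∀ j ∈ Icc 1 I,
              hw xh j * (prevF K p0 p1 n (k+1) j) ^ 2 = hw xh j * (p1 n k j) ^ 2 := by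
            intro j _
            have : prevF K p0 p1 n (k+1) j = p1 n k j := by
              unfold prevF
              rw [if_neg (by omega : ¬ k + 1 = 1)]
              norm_num
            rw [this]
          rw [Finset.sum_congr rfl hprev] at hfs
          rw [Finset.sum_Icc_succ_top (by omega : 1 ≤ k + 1)]
          linarith
    have hfK := fin K hK le_rfl
    -- total flux over the coarse step
    have hfluxsum : ∑ k' ∈ Icc 1 K, 2 * δt1 * (uF I xh p1 r1 n k' I * p2 n (I+1))
        = 2 * δt2 * (uC I J xh p2 r2 n I * p2 n (I+1)) := by
      have e1 : ∀ k' ∈ Icc 1 K, 2 * δt1 * (uF I xh p1 r1 n k' I * p2 n (I+1))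
          = (δt1 * uF I xh p1 r1 n k' I) * (2 * p2 n (I+1)) := fun k' _ => by ring
      rw [Finset.sum_congr rfl e1, ← Finset.sum_mul, ← hflux]
      ring
    rw [hfluxsum] at hfK
    have hc := coarseStep n hn
    linarith
  -- induction over coarse steps
  have main : ∀ n, 1 ≤ n → n ≤ N2 →
      ∑ j ∈ Icc 1 I, hw xh j * (p1 n K j) ^ 2 + ∑ j ∈ Icc (I+1) J, hw xh j * (p2 n j) ^ 2
        ≤ ∑ j ∈ Icc 1 I, hw xh j * (p0 j) ^ 2
          + ∑ j ∈ Icc (I+1) J, hw xh j * (p0 j) ^ 2 := by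
    intro n
    induction n with
    | zero => omega
    | succ n ih =>
      intro h1 h2
      have hst := stepN (n+1) (mem_Icc.mpr ⟨by omega, h2⟩)
      rcases Nat.eq_zero_or_pos n with hn0 | hn0
      · subst hn0
        have e1 : ∀ j ∈ Icc 1 I,
            hw xh j * (prevF K p0 p1 1 1 j) ^ 2 = hw xh j * (p0 j) ^ 2 := by
          intro j _
          simp [prevF]
        have e2 : ∀ j ∈ Icc (I+1) J,
            hw xh j * (prevC p0 p2 1 j) ^ 2 = hw xh j * (p0 j) ^ 2 := by
          intro j _
          simp [prevC]
        rw [Finset.sum_congr rfl e1, Finset.sum_congr rfl e2] at hst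
        exact hst
      · have ihn := ih (by omega) (by omega)
        have e1 : ∀ j ∈ Icc 1 I,
            hw xh j * (prevF K p0 p1 (n+1) 1 j) ^ 2 = hw xh j * (p1 n K j) ^ 2 := by
          intro j _
          have : prevF K p0 p1 (n+1) 1 j = p1 n K j := by
            unfold prevF
            rw [if_pos rfl, if_neg (by omega : ¬ n + 1 = 1)]
            norm_num
          rw [this]
        have e2 : ∀ j ∈ Icc (I+1) J,
            hw xh j * (prevC p0 p2 (n+1) j) ^ 2 = hw xh j * (p2 n j) ^ 2 := by
          intro j _
          have : prevC p0 p2 (n+1) j = p2 n j := by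
            unfold prevC
            rw [if_neg (by omega : ¬ n + 1 = 1)]
            norm_num
          rw [this]
        rw [Finset.sum_congr rfl e1, Finset.sum_congr rfl e2] at hst
        linarith
  have hfinal := main N2 hN2 le_rfl
  have hsplit : ∑ j ∈ Icc 1 I, hw xh j * (p0 j) ^ 2
      + ∑ j ∈ Icc (I+1) J, hw xh j * (p0 j) ^ 2
      = ∑ j ∈ Icc 1 J, hw xh j * (p0 j) ^ 2 := by
    have e1 : Icc 1 I = Ico 1 (I+1) := by rw [Finset.Ico_add_one_right_eq_Icc]
    have e2 : Icc (I+1) J = Ico (I+1) (J+1) := by rw [Finset.Ico_add_one_right_eq_Icc]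
    have e3 : Icc 1 J = Ico 1 (J+1) := by rw [Finset.Ico_add_one_right_eq_Icc]
    rw [e1, e2, e3]
    exact Finset.sum_Ico_consecutive _ (by omega) (by omega)
  linarith
end
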